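/- arXiv:2211.11184 — 4 statements merged into one kernel-verified Lean document; each statement's English description precedes it below -/
import Mathlib

section
/- Generalized extended continuous mapping theorem: Let D and E be metrizable linear topological spaces, let D_n, D_g ⊆ D and D_n^→ ⊆ D_n for all n ∈ ℕ. Suppose Borel measurable functions g_n : D_n → E and g : D_g → E satisfy: whenever h_n → h in D with h_n ∈ D_n^→ for all sufficiently large n and h ∈ D_g, then g_n(h_n) → g(h) in E. Let H_n : Ω → D_n and H : Ω → D_g be Borel measurable maps on a probability space (Ω,𝒜,ℙ) such that H_n →_w H, ℙ(H ∈ D_*) = 0 and ℙ(H ∈ D_∞) = 1, where D_∞ := {h ∈ D : there exist h_n → h with h_n ∈ D_n^→ for all sufficiently large n} and D_* := ∩_{m=1}^∞ closure(∪_{n=m}^∞ (D ∖ D_n^→)). Then g_n(H_n) →_w g(H). -/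
open MeasureTheory Filter Topology

open scoped ENNReal NNReal

noncomputable section

/-- Weak convergence (convergence in distribution) of random elements of a topological
space `D`: `E[f(Xₙ)] → E[f(X)]` for every bounded continuous `f : D → ℝ`. -/
def WeakConv {Ω D : Type*} [MeasurableSpace Ω] [TopologicalSpace D]
    (P : Measure Ω) (X : ℕ → Ω → D) (L : Ω → D) : Prop :=
  ∀ f : BoundedContinuousFunction D ℝ,
    Tendsto (fun n => ∫ ω, f (X n ω) ∂P) atTop (𝓝 (∫ ω, f (L ω) ∂P))

/-- Generalized extended continuous mapping theorem: if `gₙ(hₙ) → g(h)` along sequences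
`hₙ → h` with `hₙ ∈ Dₙ^→` eventually and `h ∈ D_g`, `Hₙ →_w H`, `ℙ(H ∈ D_*) = 0` and
`ℙ(H ∈ D_∞) = 1`, then `gₙ(Hₙ) →_w g(H)`. -/
theorem generalized_extended_continuous_mapping
    {D E : Type*}
    -- D and E are metrizable linear topological spaces
    [TopologicalSpace D] [AddCommGroup D] [Module ℝ D] [IsTopologicalAddGroup D]
    [ContinuousSMul ℝ D] [TopologicalSpace.MetrizableSpace D]
    [MeasurableSpace D] [BorelSpace D]
    [TopologicalSpace E] [AddCommGroup E] [Module ℝ E] [IsTopologicalAddGroup E]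
    [ContinuousSMul ℝ E] [TopologicalSpace.MetrizableSpace E]
    [MeasurableSpace E] [BorelSpace E]
    {Ω : Type*} [MeasurableSpace Ω] (P : Measure Ω) [IsProbabilityMeasure P]
    -- the sets Dₙ, D_g ⊆ D and Dₙ^→ ⊆ Dₙ
    (Dn : ℕ → Set D) (Dg : Set D) (Dnarr : ℕ → Set D)
    (hDnarr : ∀ n, Dnarr n ⊆ Dn n)
    -- Borel measurable functions gₙ : Dₙ → E and g : D_g → E
    (g : ℕ → D → E) (gl : D → E)
    (hgmeas : ∀ n, Measurable ((Dn n).restrict (g n)))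
    (hglmeas : Measurable (Dg.restrict gl))
    -- the continuity condition along sequences
    (hconv : ∀ (h : ℕ → D) (x : D), x ∈ Dg →
      (∀ᶠ n in atTop, h n ∈ Dnarr n) → Tendsto h atTop (𝓝 x) →
      Tendsto (fun n => g n (h n)) atTop (𝓝 (gl x)))
    -- Borel measurable maps Hₙ : Ω → Dₙ and H : Ω → D_g
    (H : ℕ → Ω → D) (Hl : Ω → D)
    (hHval : ∀ n ω, H n ω ∈ Dn n) (hHlval : ∀ ω, Hl ω ∈ Dg)
    (hHmeas : ∀ n, Measurable (H n)) (hHlmeas : Measurable Hl)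
    (hW : WeakConv P H Hl)
    -- ℙ(H ∈ D_*) = 0 and ℙ(H ∈ D_∞) = 1
    (hstar : P {ω | Hl ω ∈ ⋂ m : ℕ, closure (⋃ n ∈ Set.Ici m, (Dnarr n)ᶜ)} = 0)
    (hinfty : P {ω | Hl ω ∈ {x : D | ∃ h : ℕ → D,
      Tendsto h atTop (𝓝 x) ∧ ∀ᶠ n in atTop, h n ∈ Dnarr n}} = 1) :
    WeakConv P (fun n ω => g n (H n ω)) (fun ω => gl (Hl ω)) := by
  classical
  letI : MetricSpace D := TopologicalSpace.metrizableSpaceMetric D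
  -- measurability of the composed maps
  have hφmeas : ∀ n, Measurable fun ω => g n (H n ω) := fun n =>
    (hgmeas n).comp ((hHmeas n).subtype_mk (h := hHval n))
  have hφlmeas : Measurable fun ω => gl (Hl ω) :=
    hglmeas.comp (hHlmeas.subtype_mk (h := hHlval))
  -- pushforward probability measures on D
  haveI : ∀ n, IsProbabilityMeasure (P.map (H n)) := fun n =>
    Measure.isProbabilityMeasure_map (hHmeas n).aemeasurable
  haveI : IsProbabilityMeasure (P.map Hl) :=
    Measure.isProbabilityMeasure_map hHlmeas.aemeasurable
  haveI : ∀ n, IsProbabilityMeasure (P.map (fun ω => g n (H n ω))) := fun n =>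
    Measure.isProbabilityMeasure_map (hφmeas n).aemeasurable
  haveI : IsProbabilityMeasure (P.map (fun ω => gl (Hl ω))) :=
    Measure.isProbabilityMeasure_map hφlmeas.aemeasurable
  set νD : ℕ → ProbabilityMeasure D := fun n =>
    ⟨P.map (H n), Measure.isProbabilityMeasure_map (hHmeas n).aemeasurable⟩ with hνD_def
  set νDl : ProbabilityMeasure D :=
    ⟨P.map Hl, Measure.isProbabilityMeasure_map hHlmeas.aemeasurable⟩ with hνDl_def
  -- weak convergence of the pushforwards of H n
  have hνD : Tendsto νD atTop (𝓝 νDl) := by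
    rw [MeasureTheory.ProbabilityMeasure.tendsto_iff_forall_integral_tendsto]
    intro fb
    have h1 : ∀ n, ∫ x, fb x ∂(P.map (H n)) = ∫ ω, fb (H n ω) ∂P := fun n =>
      integral_map (hHmeas n).aemeasurable fb.continuous.measurable.aestronglyMeasurable
    have h2 : ∫ x, fb x ∂(P.map Hl) = ∫ ω, fb (Hl ω) ∂P :=
      integral_map hHlmeas.aemeasurable fb.continuous.measurable.aestronglyMeasurable
    have := hW fb
    rw [← h2] at this
    exact this.congr fun n => (h1 n).symm
  -- key portmanteau-type estimate for closed sets in E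
  have key : ∀ F : Set E, IsClosed F →
      atTop.limsup (fun n => P.map (fun ω => g n (H n ω)) F) ≤
        P.map (fun ω => gl (Hl ω)) F := by
    intro F hF
    set S : ℕ → Set D := fun n => {x | x ∈ Dnarr n ∧ g n x ∈ F} ∪ (Dnarr n)ᶜ with hS_def
    set A : ℕ → Set D := fun m => closure (⋃ n ∈ Set.Ici m, S n) with hA_def
    have hAanti : Antitone A := fun m m' hmm =>
      closure_mono (Set.biUnion_subset_biUnion_left (Set.Ici_subset_Ici.mpr hmm))
    have hAclosed : ∀ m, IsClosed (A m) := fun m => isClosed_closure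
    -- step 1: the limsup is bounded by P (Hl ⁻¹' A m) for every m
    have step1 : ∀ m, atTop.limsup (fun n => P.map (fun ω => g n (H n ω)) F) ≤
        P (Hl ⁻¹' A m) := by
      intro m
      have hsub : ∀ n, m ≤ n →
          (fun ω => g n (H n ω)) ⁻¹' F ⊆ H n ⁻¹' A m := by
        intro n hn ω hω
        refine subset_closure (Set.mem_biUnion hn ?_)
        by_cases hmem : H n ω ∈ Dnarr n
        · exact Or.inl ⟨hmem, hω⟩
        · exact Or.inr hmem
      have hle1 : atTop.limsup (fun n => P.map (fun ω => g n (H n ω)) F) ≤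
          atTop.limsup (fun n => (P.map (H n)) (A m)) := by
        refine Filter.limsup_le_limsup ?_
        filter_upwards [eventually_ge_atTop m] with n hn
        rw [Measure.map_apply (hφmeas n) hF.measurableSet,
          Measure.map_apply (hHmeas n) (hAclosed m).measurableSet]
        exact measure_mono (hsub n hn)
      have hle2 : atTop.limsup (fun n => (P.map (H n)) (A m)) ≤ (P.map Hl) (A m) :=
        ProbabilityMeasure.limsup_measure_closed_le_of_tendsto hνD (hAclosed m)
      rw [Measure.map_apply hHlmeas (hAclosed m).measurableSet] at hle2
      exact hle1.trans hle2
    -- step 2: pass to the intersection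
    have step2 : atTop.limsup (fun n => P.map (fun ω => g n (H n ω)) F) ≤
        P (Hl ⁻¹' ⋂ m, A m) := by
      have hiInt : P (Hl ⁻¹' ⋂ m, A m) = ⨅ m, P (Hl ⁻¹' A m) := by
        rw [Set.preimage_iInter]
        refine Antitone.measure_iInter (fun m m' hmm => Set.preimage_mono (hAanti hmm))
          (fun m => (hHlmeas (hAclosed m).measurableSet).nullMeasurableSet)
          ⟨0, measure_ne_top _ _⟩
      rw [hiInt]
      exact le_iInf step1
    -- step 3: pointwise claim on the intersection
    have claim : ∀ x, x ∈ Dg → x ∈ ⋂ m, A m →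
        x ∉ (⋂ m : ℕ, closure (⋃ n ∈ Set.Ici m, (Dnarr n)ᶜ)) → gl x ∈ F := by
      intro x hxDg hxA hxstar
      rw [Set.mem_iInter] at hxA
      simp only [Set.mem_iInter, not_forall] at hxstar
      obtain ⟨m0, hm0⟩ := hxstar
      have hop : IsOpen (closure (⋃ n ∈ Set.Ici m0, (Dnarr n)ᶜ))ᶜ :=
        isClosed_closure.isOpen_compl
      obtain ⟨r, hr, hball⟩ := Metric.isOpen_iff.mp hop x hm0
      have hU : ∀ y, dist y x < r → ∀ n, m0 ≤ n → y ∈ Dnarr n := by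
        intro y hy n hn
        by_contra hyn
        exact (hball hy) (subset_closure (Set.mem_biUnion hn hyn))
      -- choose approximating points
      have hsel : ∀ k : ℕ, ∃ n : ℕ, ∃ y : D, m0 ≤ n ∧ k ≤ n ∧ y ∈ Dnarr n ∧
          g n y ∈ F ∧ dist y x < min r (1 / (k + 1)) := by
        intro k
        have hx' := hxA (max m0 k)
        have hpos : 0 < min r (1 / (k + 1 : ℝ)) := lt_min hr (by positivity)
        obtain ⟨y, hy, hyd⟩ := Metric.mem_closure_iff.mp hx' _ hpos
        obtain ⟨n, hn, hyS⟩ := Set.mem_iUnion₂.mp hy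
        have hn0 : m0 ≤ n := le_trans (le_max_left _ _) hn
        have hdyx : dist y x < min r (1 / (k + 1 : ℝ)) := by rwa [dist_comm] at hyd
        have hyDn : y ∈ Dnarr n :=
          hU y (lt_of_lt_of_le hdyx (min_le_left _ _)) n hn0
        have hgF : g n y ∈ F := by
          rcases hyS with hyS | hyS
          · exact hyS.2
          · exact absurd hyDn hyS
        exact ⟨n, y, hn0, le_trans (le_max_right _ _) hn, hyDn, hgF, hdyx⟩
      choose N y hNm0 hNk hyD hyF hyd using hsel
      -- the modified sequence
      set h' : ℕ → D := fun n => if hn : ∃ k, N k = n then y hn.choose else x with hh'_def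
      have hmem : ∀ n, m0 ≤ n → h' n ∈ Dnarr n := by
        intro n hn
        by_cases hex : ∃ k, N k = n
        · simp only [hh'_def, dif_pos hex]
          have := hyD hex.choose
          rwa [hex.choose_spec] at this
        · simp only [hh'_def, dif_neg hex]
          exact hU x (by simpa using hr) n hn
      have htends : Tendsto h' atTop (𝓝 x) := by
        rw [Metric.tendsto_atTop]
        intro ε hε
        obtain ⟨K, hKε⟩ := exists_nat_one_div_lt hε
        refine ⟨(Finset.range (K + 1)).sup N + 1, fun n hn => ?_⟩
        by_cases hex : ∃ k, N k = n
        · simp only [hh'_def, dif_pos hex]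
          set k := hex.choose with hk_def
          have hNk' : N k = n := hex.choose_spec
          have hkK : K < k := by
            by_contra hle
            push_neg at hle
            have : N k ≤ (Finset.range (K + 1)).sup N :=
              Finset.le_sup (Finset.mem_range.mpr (Nat.lt_succ_of_le hle))
            omega
          have h1 : dist (y k) x < 1 / (k + 1 : ℝ) :=
            lt_of_lt_of_le (hyd k) (min_le_right _ _)
          have h2 : (1 : ℝ) / (k + 1) ≤ 1 / (K + 1) := by
            apply one_div_le_one_div_of_le
            · positivity
            · have : (K : ℝ) ≤ k := by exact_mod_cast hkK.le
              linarith
          exact lt_of_lt_of_le h1 (h2.trans hKε.le)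
        · simp only [hh'_def, dif_neg hex, dist_self]
          exact hε
      have hg : Tendsto (fun n => g n (h' n)) atTop (𝓝 (gl x)) :=
        hconv h' x hxDg (eventually_atTop.mpr ⟨m0, hmem⟩) htends
      have hfreq : ∃ᶠ n in atTop, g n (h' n) ∈ F := by
        rw [frequently_atTop]
        intro M
        refine ⟨N M, hNk M, ?_⟩
        have hex : ∃ k, N k = N M := ⟨M, rfl⟩
        simp only [hh'_def, dif_pos hex]
        have := hyF hex.choose
        rwa [hex.choose_spec] at this
      exact hF.mem_of_frequently_of_tendsto hfreq hg
    -- combine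
    have step3 : P (Hl ⁻¹' ⋂ m, A m) ≤ P.map (fun ω => gl (Hl ω)) F := by
      have hsub : Hl ⁻¹' (⋂ m, A m) ⊆
          ((fun ω => gl (Hl ω)) ⁻¹' F) ∪
            {ω | Hl ω ∈ ⋂ m : ℕ, closure (⋃ n ∈ Set.Ici m, (Dnarr n)ᶜ)} := by
        intro ω hω
        by_cases hst : Hl ω ∈ ⋂ m : ℕ, closure (⋃ n ∈ Set.Ici m, (Dnarr n)ᶜ)
        · exact Or.inr hst
        · exact Or.inl (claim (Hl ω) (hHlval ω) hω hst)
      calc P (Hl ⁻¹' ⋂ m, A m) ≤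
          P (((fun ω => gl (Hl ω)) ⁻¹' F) ∪
            {ω | Hl ω ∈ ⋂ m : ℕ, closure (⋃ n ∈ Set.Ici m, (Dnarr n)ᶜ)}) :=
            measure_mono hsub
        _ ≤ P ((fun ω => gl (Hl ω)) ⁻¹' F) +
            P {ω | Hl ω ∈ ⋂ m : ℕ, closure (⋃ n ∈ Set.Ici m, (Dnarr n)ᶜ)} :=
            measure_union_le _ _
        _ = P ((fun ω => gl (Hl ω)) ⁻¹' F) := by rw [hstar, add_zero]
        _ = P.map (fun ω => gl (Hl ω)) F := by
            rw [Measure.map_apply hφlmeas hF.measurableSet]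
    exact step2.trans step3
  -- turn the closed-set condition into weak convergence on E
  set νE : ℕ → ProbabilityMeasure E := fun n =>
    ⟨P.map (fun ω => g n (H n ω)), Measure.isProbabilityMeasure_map (hφmeas n).aemeasurable⟩
    with hνE_def
  set νEl : ProbabilityMeasure E :=
    ⟨P.map (fun ω => gl (Hl ω)), Measure.isProbabilityMeasure_map hφlmeas.aemeasurable⟩
    with hνEl_def
  have hopens' : ∀ G : Set E, IsOpen G →
      P.map (fun ω => gl (Hl ω)) G ≤ atTop.liminf (fun n => P.map (fun ω => g n (H n ω)) G) :=
    limsup_measure_closed_le_iff_liminf_measure_open_ge.mp key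
  have hopens : ∀ G : Set E, IsOpen G →
      νEl G ≤ atTop.liminf (fun n => νE n G) := by
    intro G hG
    have aux : (↑(atTop.liminf fun n => νE n G) : ℝ≥0∞) =
        atTop.liminf fun n => ((νE n G : ℝ≥0) : ℝ≥0∞) := by
      refine Monotone.map_liminf_of_continuousAt (F := atTop) ENNReal.coe_mono
        (fun n => νE n G) ?_ ?_ ?_
      · exact ENNReal.continuous_coe.continuousAt
      · exact IsBoundedUnder.isCoboundedUnder_ge ⟨1, by
          simp [eventually_map, ProbabilityMeasure.apply_le_one]⟩
      · exact ⟨0, by simp⟩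
    rw [← ENNReal.coe_le_coe, aux]
    simp only [ProbabilityMeasure.ennreal_coeFn_eq_coeFn_toMeasure]
    exact hopens' G hG
  have hνE : Tendsto νE atTop (𝓝 νEl) := tendsto_of_forall_isOpen_le_liminf hopens
  -- conclude
  intro f
  have hint := ProbabilityMeasure.tendsto_iff_forall_integral_tendsto.mp hνE f
  have h1 : ∀ n, ∫ x, f x ∂(P.map (fun ω => g n (H n ω))) = ∫ ω, f (g n (H n ω)) ∂P := fun n =>
    integral_map (hφmeas n).aemeasurable f.continuous.measurable.aestronglyMeasurable
  have h2 : ∫ x, f x ∂(P.map (fun ω => gl (Hl ω))) = ∫ ω, f (gl (Hl ω)) ∂P :=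
    integral_map hφlmeas.aemeasurable f.continuous.measurable.aestronglyMeasurable
  rw [← h2]
  exact hint.congr fun n => h1 n
end
end

section
/- One-sample null limit distribution for KL divergence: Let (S,𝒮,μ) be a probability space and let (μ_n)_{n∈ℕ} be random probability measures on S over a probability space (Ω,𝒜,ℙ) such that, almost surely, μ_n ≪ μ with density p_{μ_n} and KL(μ_n‖μ) < ∞ for all n sufficiently large, and such that ω ↦ p_{μ_n}(ω,·) is Borel measurable as a map into L²(μ). Let r_n → ∞ be a sequence of positive reals. If the L²(μ)-valued random elements r_n(p_{μ_n} − 1) converge weakly to a random element B of L²(μ), then the real random variables r_n²·KL(μ_n‖μ) converge in distribution to (1/2)∫_S B² dμ = (1/2)‖B‖²_{L²(μ)}. -/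
open MeasureTheory Filter Topology
noncomputable section
namespace KLAux


lemma psi_nonneg {v : ℝ} (hv : -1 ≤ v) : 0 ≤ (1 + v) * Real.log (1 + v) - v := by
  rcases eq_or_lt_of_le hv with h | h
  · simp [← h]
  · have h1 : (0:ℝ) < 1 + v := by linarith
    have h2 : Real.log (1 + v)⁻¹ ≤ (1 + v)⁻¹ - 1 := Real.log_le_sub_one_of_pos (by positivity)
    rw [Real.log_inv] at h2
    have h3 : 1 - (1 + v)⁻¹ ≤ Real.log (1 + v) := by linarith
    have h4 : (1 + v) * (1 - (1 + v)⁻¹) ≤ (1 + v) * Real.log (1 + v) :=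
      mul_le_mul_of_nonneg_left h3 h1.le
    have h5 : (1 + v) * (1 - (1 + v)⁻¹) = v := by field_simp; ring
    linarith

lemma psi_le_sq {v : ℝ} (hv : -1 ≤ v) : (1 + v) * Real.log (1 + v) - v ≤ v ^ 2 := by
  rcases eq_or_lt_of_le hv with h | h
  · simp [← h]
  · have h1 : (0:ℝ) < 1 + v := by linarith
    have h2 : Real.log (1 + v) ≤ v := by
      have := Real.log_le_sub_one_of_pos h1; linarith
    have h4 : (1 + v) * Real.log (1 + v) ≤ (1 + v) * v := mul_le_mul_of_nonneg_left h2 h1.le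
    nlinarith

lemma abs_le_of_mem_uIcc {t v : ℝ} (ht : t ∈ Set.uIcc 0 v) : |t| ≤ |v| := by
  rcases Set.mem_uIcc.1 ht with ⟨h1, h2⟩ | ⟨h1, h2⟩ <;> rw [abs_le] <;>
    constructor <;> nlinarith [le_abs_self v, neg_abs_le v]

lemma log_sub_bound {t : ℝ} (ht : |t| ≤ 1/2) : |Real.log (1 + t) - t| ≤ 2 * t ^ 2 := by
  have h := Real.abs_log_sub_add_sum_range_le (x := -t) (by rw [abs_neg]; linarith) 1
  simp only [Finset.range_one, Finset.sum_singleton, pow_one] at h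
  have h2 : |(-t) + Real.log (1 - (-t))| ≤ |(-t)| ^ 2 / (1 - |(-t)|) := by simpa using h
  rw [abs_neg] at h2
  have h3 : |Real.log (1 + t) - t| = |(-t) + Real.log (1 - (-t))| := by
    rw [sub_neg_eq_add]; ring_nf
  rw [h3]
  refine h2.trans ?_
  have h4 : (1:ℝ)/2 ≤ 1 - |t| := by linarith
  have h5 : |t| ^ 2 / (1 - |t|) ≤ |t| ^ 2 / (1/2) :=
    div_le_div_of_nonneg_left (by positivity) (by norm_num) h4
  calc |t| ^ 2 / (1 - |t|) ≤ |t| ^ 2 / (1/2) := h5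
    _ = 2 * t ^ 2 := by rw [sq_abs]; ring

lemma psi_taylor {v : ℝ} (hv : |v| ≤ 1/2) :
    |(1 + v) * Real.log (1 + v) - v - v ^ 2 / 2| ≤ 2 * |v| ^ 3 := by
  set g : ℝ → ℝ := fun t => (1 + t) * Real.log (1 + t) - t - t ^ 2 / 2 with hg
  have hderiv : ∀ t ∈ Set.uIcc (0:ℝ) v, HasDerivAt g (Real.log (1 + t) - t) t := by
    intro t ht
    have htv : |t| ≤ 1/2 := (abs_le_of_mem_uIcc ht).trans hv
    have h1 : (0:ℝ) < 1 + t := by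
      have := neg_le_of_abs_le htv; linarith
    have hlog : HasDerivAt (fun t : ℝ => Real.log (1 + t)) (1 / (1 + t)) t := by
      have hid : HasDerivAt (fun t : ℝ => 1 + t) 1 t := by
        simpa using (hasDerivAt_id t).const_add (1:ℝ)
      simpa [one_div, Function.comp_def] using (Real.hasDerivAt_log h1.ne').comp t hid
    have hmul : HasDerivAt (fun t : ℝ => (1 + t) * Real.log (1 + t))
        (1 * Real.log (1 + t) + (1 + t) * (1 / (1 + t))) t :=
      ((hasDerivAt_id t).const_add (1:ℝ)).mul hlog
    have h2 : HasDerivAt (fun t : ℝ => t ^ 2 / 2) t t := by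
      simpa using (hasDerivAt_pow 2 t).div_const 2
    have := (hmul.sub (hasDerivAt_id t)).sub h2
    have heq : 1 * Real.log (1 + t) + (1 + t) * (1 / (1 + t)) - 1 - t
        = Real.log (1 + t) - t := by field_simp; ring
    rw [heq] at this
    exact this
  have hcont : IntervalIntegrable (fun t => Real.log (1 + t) - t) MeasureTheory.volume 0 v := by
    apply ContinuousOn.intervalIntegrable
    have : ContinuousOn (fun t : ℝ => Real.log (1 + t)) (Set.uIcc 0 v) := by
      apply Real.continuousOn_log.comp (by fun_prop)
      intro t ht
      have htv : |t| ≤ 1/2 := (abs_le_of_mem_uIcc ht).trans hv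
      have : (0:ℝ) < 1 + t := by have := neg_le_of_abs_le htv; linarith
      simp only [Set.mem_compl_iff, Set.mem_singleton_iff]
      exact this.ne'
    exact this.sub continuousOn_id
  have hftc := intervalIntegral.integral_eq_sub_of_hasDerivAt hderiv hcont
  have hg0 : g 0 = 0 := by simp [hg]
  have hbd : ‖∫ t in (0:ℝ)..v, (Real.log (1 + t) - t)‖ ≤ (2 * v ^ 2) * |v - 0| := by
    apply intervalIntegral.norm_integral_le_of_norm_le_const
    intro t ht
    have htv : |t| ≤ |v| := by
      rcases Set.mem_uIoc.1 ht with ⟨h1, h2⟩ | ⟨h1, h2⟩ <;> rw [abs_le] <;>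
        constructor <;> nlinarith [le_abs_self v, neg_abs_le v]
    have h1 : |Real.log (1 + t) - t| ≤ 2 * t ^ 2 := log_sub_bound (htv.trans hv)
    have h2 : t ^ 2 ≤ v ^ 2 := by nlinarith [sq_abs t, sq_abs v, abs_nonneg t, abs_nonneg v]
    rw [Real.norm_eq_abs]
    linarith
  rw [hftc, hg0, sub_zero] at hbd
  rw [Real.norm_eq_abs] at hbd
  have : (2 * v ^ 2) * |v - 0| = 2 * |v| ^ 3 := by
    rw [sub_zero, ← sq_abs]; ring
  rw [this] at hbd
  exact hbd



/-- Generalized dominated convergence theorem (moving dominators). -/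
lemma genDCT {α : Type*} [MeasurableSpace α] {μ : Measure α}
    {Fk : ℕ → α → ℝ} {F : α → ℝ} {gk : ℕ → α → ℝ} {g : α → ℝ}
    (hFmeas : ∀ k, AEStronglyMeasurable (Fk k) μ)
    (hFmeas' : AEStronglyMeasurable F μ)
    (hgk : ∀ k, Integrable (gk k) μ) (hg : Integrable g μ)
    (hb : ∀ k, ∀ᵐ s ∂μ, |Fk k s| ≤ gk k s)
    (haeF : ∀ᵐ s ∂μ, Tendsto (fun k => Fk k s) atTop (𝓝 (F s)))
    (haeg : ∀ᵐ s ∂μ, Tendsto (fun k => gk k s) atTop (𝓝 (g s)))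
    (hgi : Tendsto (fun k => ∫ s, gk k s ∂μ) atTop (𝓝 (∫ s, g s ∂μ))) :
    Tendsto (fun k => ∫ s, Fk k s ∂μ) atTop (𝓝 (∫ s, F s ∂μ)) := by
  have hball : ∀ᵐ s ∂μ, ∀ k, |Fk k s| ≤ gk k s := ae_all_iff.2 hb
  have hFg : ∀ᵐ s ∂μ, |F s| ≤ g s := by
    filter_upwards [hball, haeF, haeg] with s h1 h2 h3
    exact le_of_tendsto_of_tendsto h2.abs h3 (Eventually.of_forall h1)
  have hgpos : ∀ k, ∀ᵐ s ∂μ, 0 ≤ gk k s := by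
    intro k; filter_upwards [hb k] with s hs; exact (abs_nonneg _).trans hs
  have hFint : Integrable F μ :=
    hg.mono' hFmeas' (by filter_upwards [hFg] with s hs; simpa using hs)
  have hFkint : ∀ k, Integrable (Fk k) μ := fun k =>
    (hgk k).mono' (hFmeas k) (by filter_upwards [hb k] with s hs; simpa using hs)
  have hdk_int : ∀ k, Integrable (fun s => |Fk k s - F s|) μ := fun k =>
    ((hFkint k).sub hFint).abs
  set t : ℕ → ℝ := fun k => ∫ s, |Fk k s - F s| ∂μ with hts
  have ht_nonneg : ∀ k, 0 ≤ t k := fun k => integral_nonneg (fun s => abs_nonneg _)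
  set φ : ℕ → α → ℝ := fun k s => gk k s + g s - |Fk k s - F s| with hφ
  have hphi_int : ∀ k, Integrable (φ k) μ := fun k => ((hgk k).add hg).sub (hdk_int k)
  have hphi_nonneg : ∀ k, 0 ≤ᵐ[μ] (φ k) := by
    intro k
    filter_upwards [hb k, hFg] with s h1 h2
    have h3 : |Fk k s - F s| ≤ |Fk k s| + |F s| := by
      have := abs_add_le (Fk k s) (-(F s)); simpa [sub_eq_add_neg] using this
    simp only [hφ, Pi.zero_apply]
    linarith
  have hphi_split : ∀ k, ∫ s, φ k s ∂μ = (∫ s, gk k s ∂μ + ∫ s, g s ∂μ) - t k := by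
    intro k
    have e1 : ∫ s, φ k s ∂μ = ∫ s, (gk k s + g s) ∂μ - ∫ s, |Fk k s - F s| ∂μ :=
      integral_sub (f := fun s => gk k s + g s) (g := fun s => |Fk k s - F s|)
        ((hgk k).add hg) (hdk_int k)
    have e2 : ∫ s, (gk k s + g s) ∂μ = ∫ s, gk k s ∂μ + ∫ s, g s ∂μ :=
      integral_add (hgk k) hg
    rw [e1, e2]
  have hphi_pos_int : ∀ k, 0 ≤ ∫ s, φ k s ∂μ := fun k =>
    integral_nonneg_of_ae (hphi_nonneg k)
  have hg2pos : 0 ≤ᵐ[μ] (fun s => 2 * g s) := by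
    filter_upwards [hFg] with s hs
    have := (abs_nonneg (F s)).trans hs; simp; linarith
  -- Fatou step
  have fatou : ENNReal.ofReal (∫ s, 2 * g s ∂μ)
      ≤ liminf (fun k => ENNReal.ofReal (∫ s, φ k s ∂μ)) atTop := by
    have e1 : ENNReal.ofReal (∫ s, 2 * g s ∂μ) = ∫⁻ s, ENNReal.ofReal (2 * g s) ∂μ :=
      ofReal_integral_eq_lintegral_ofReal (hg.const_mul 2) hg2pos
    have e2 : ∫⁻ s, ENNReal.ofReal (2 * g s) ∂μ
        = ∫⁻ s, liminf (fun k => ENNReal.ofReal (φ k s)) atTop ∂μ := by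
      apply lintegral_congr_ae
      filter_upwards [haeF, haeg] with s h2 h3
      have habs : Tendsto (fun k => |Fk k s - F s|) atTop (𝓝 0) := by
        have := (h2.sub_const (F s)).abs
        simpa using this
      have hphi_t : Tendsto (fun k => φ k s) atTop (𝓝 (2 * g s)) := by
        have := (h3.add_const (g s)).sub habs
        simpa [hφ, two_mul] using this
      exact (((ENNReal.continuous_ofReal.tendsto _).comp hphi_t).liminf_eq).symm
    have e3 : ∫⁻ s, liminf (fun k => ENNReal.ofReal (φ k s)) atTop ∂μ
        ≤ liminf (fun k => ∫⁻ s, ENNReal.ofReal (φ k s) ∂μ) atTop :=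
      lintegral_liminf_le' fun k =>
        ENNReal.measurable_ofReal.comp_aemeasurable
          (hphi_int k).aestronglyMeasurable.aemeasurable
    have e4 : (fun k => ∫⁻ s, ENNReal.ofReal (φ k s) ∂μ)
        = fun k => ENNReal.ofReal (∫ s, φ k s ∂μ) := by
      funext k
      exact (ofReal_integral_eq_lintegral_ofReal (hphi_int k) (hphi_nonneg k)).symm
    rw [e1, e2, ← e4]
    exact e3
  -- ε-chase: t k → 0
  have key : Tendsto t atTop (𝓝 0) := by
    rw [NormedAddCommGroup.tendsto_nhds_zero]
    intro ε hε
    have hc : Tendsto (fun k => ∫ s, gk k s ∂μ + ∫ s, g s ∂μ) atTop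
        (𝓝 (2 * ∫ s, g s ∂μ)) := by
      have := hgi.add_const (∫ s, g s ∂μ)
      simpa [two_mul] using this
    have hg2 : ∫ s, 2 * g s ∂μ = 2 * ∫ s, g s ∂μ := by
      simpa using integral_const_mul (2:ℝ) g
    have hcev : ∀ᶠ k in atTop, ∫ s, gk k s ∂μ + ∫ s, g s ∂μ < 2 * ∫ s, g s ∂μ + ε/4 :=
      hc.eventually (gt_mem_nhds (by linarith))
    by_cases hG : 2 * ∫ s, g s ∂μ ≤ ε/2
    · filter_upwards [hcev] with k hk
      have h1 : t k ≤ ∫ s, gk k s ∂μ + ∫ s, g s ∂μ := by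
        have := hphi_pos_int k; rw [hphi_split k] at this; linarith
      rw [Real.norm_eq_abs, abs_of_nonneg (ht_nonneg k)]
      linarith
    · push_neg at hG
      have hGpos : 0 < 2 * ∫ s, g s ∂μ := lt_trans (by linarith) hG
      have hlt : ENNReal.ofReal (2 * ∫ s, g s ∂μ - ε/2)
          < ENNReal.ofReal (2 * ∫ s, g s ∂μ) := by
        rw [ENNReal.ofReal_lt_ofReal_iff hGpos]; linarith
      rw [hg2] at fatou
      have hev := eventually_lt_of_lt_liminf (lt_of_lt_of_le hlt fatou)
      filter_upwards [hev, hcev] with k hk1 hk2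
      have h3 : 2 * ∫ s, g s ∂μ - ε/2 ≤ ∫ s, φ k s ∂μ := by
        have := hk1.le
        rwa [ENNReal.ofReal_le_ofReal_iff (hphi_pos_int k)] at this
      rw [hphi_split k] at h3
      rw [Real.norm_eq_abs, abs_of_nonneg (ht_nonneg k)]
      linarith
  -- conclude
  have hdiff : ∀ k, ‖∫ s, Fk k s ∂μ - ∫ s, F s ∂μ‖ ≤ t k := by
    intro k
    rw [← integral_sub (hFkint k) hFint]
    simpa [Real.norm_eq_abs] using
      (norm_integral_le_integral_norm (f := fun s => Fk k s - F s) (μ := μ))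
  have h0 : Tendsto (fun k => ∫ s, Fk k s ∂μ - ∫ s, F s ∂μ) atTop (𝓝 0) :=
    squeeze_zero_norm hdiff key
  have := h0.add_const (∫ s, F s ∂μ)
  simpa using this



/-- global quadratic bound for `(1+v)·log(1+v)` (with junk-value `Real.log`). -/
lemma habs (v : ℝ) : |(1 + v) * Real.log (1 + v)| ≤ 2 + 2 * v ^ 2 := by
  set y := 1 + v with hy
  rcases le_or_gt |y| 1 with h | h
  · rcases eq_or_ne y 0 with h0 | h0
    · simp [h0]; positivity
    · have hpos : 0 < |y| := abs_pos.2 h0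
      have hlog : Real.log y = Real.log |y| := (Real.log_abs y).symm
      have h1 : Real.log |y|⁻¹ ≤ |y|⁻¹ - 1 := Real.log_le_sub_one_of_pos (by positivity)
      rw [Real.log_inv] at h1
      have h2 : Real.log |y| ≤ 0 := Real.log_nonpos (abs_nonneg y) h
      have h3 : |y * Real.log y| = |y| * (-(Real.log |y|)) := by
        rw [abs_mul, hlog, abs_of_nonpos h2]
      have h4 : |y| * (-(Real.log |y|)) ≤ |y| * (|y|⁻¹ - 1) :=
        mul_le_mul_of_nonneg_left (by linarith) (abs_nonneg y)
      have h5 : |y| * (|y|⁻¹ - 1) = 1 - |y| := by field_simp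
      have : |y * Real.log y| ≤ 1 := by rw [h3]; rw [h5] at h4; linarith [abs_nonneg y]
      refine this.trans ?_
      nlinarith [sq_nonneg v]
  · have h2 : Real.log |y| ≤ |y| - 1 := Real.log_le_sub_one_of_pos (by linarith)
    have h3 : 0 ≤ Real.log |y| := Real.log_nonneg h.le
    have h4 : |y * Real.log y| = |y| * Real.log |y| := by
      rw [abs_mul, ← Real.log_abs, abs_of_nonneg h3]
    have h5 : |y| * Real.log |y| ≤ |y| * |y| :=
      mul_le_mul_of_nonneg_left (by linarith) (abs_nonneg y)
    have h6 : |y| * |y| = y ^ 2 := by rw [← abs_mul, abs_of_nonneg (mul_self_nonneg y), sq]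
    have : |y * Real.log y| ≤ y ^ 2 := by rw [h4]; rw [h6] at h5; linarith
    refine this.trans ?_
    rw [hy]; nlinarith [sq_nonneg (1 - v)]

variable {α : Type*} [MeasurableSpace α] {μ : Measure α}

lemma L2_norm_sq [IsProbabilityMeasure μ] (w : Lp ℝ 2 μ) : ‖w‖ ^ 2 = ∫ s, (w s) ^ 2 ∂μ := by
  have h1 := (real_inner_self_eq_norm_sq w).symm
  rw [MeasureTheory.L2.inner_def] at h1
  simpa [RCLike.inner_apply, starRingEnd_apply, sq] using h1

lemma int_const_add_sq [IsProbabilityMeasure μ] (a b : ℝ) (w : Lp ℝ 2 μ) :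
    ∫ s, (a + b * (w s) ^ 2) ∂μ = a + b * ‖w‖ ^ 2 := by
  have e1 : ∫ s, (a + b * (w s) ^ 2) ∂μ
      = ∫ s, (a : ℝ) ∂μ + ∫ s, b * (w s) ^ 2 ∂μ :=
    integral_add (integrable_const a) (((Lp.memLp w).integrable_sq).const_mul b)
  have e2 : ∫ s, b * (w s) ^ 2 ∂μ = b * ∫ s, (w s) ^ 2 ∂μ :=
    integral_const_mul b _
  rw [e1, e2, integral_const, L2_norm_sq]
  simp

set_option synthInstance.maxHeartbeats 1000000 in
/-- Continuity of `z ↦ ∫ h ∘ z` on `L²` for `h` with quadratic growth. -/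
lemma continuous_integral_comp [IsProbabilityMeasure μ]
    (h : ℝ → ℝ) (hh : Continuous h) (a b : ℝ) (hbd : ∀ x, |h x| ≤ a + b * x ^ 2) :
    Continuous (fun z : Lp ℝ 2 μ => ∫ s, h (z s) ∂μ) := by
  rw [continuous_iff_seqContinuous]
  intro zk z hzk
  apply tendsto_of_subseq_tendsto
  intro ns hns
  have h1 : Tendsto (fun j => zk (ns j)) atTop (𝓝 z) := hzk.comp hns
  obtain ⟨ms, hms, hae⟩ := (tendstoInMeasure_of_tendsto_Lp h1).exists_seq_tendsto_ae
  refine ⟨ms, ?_⟩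
  have h2 : Tendsto (fun i => zk (ns (ms i))) atTop (𝓝 z) := h1.comp hms.tendsto_atTop
  have hgi : Tendsto (fun i => ∫ s, (a + b * ((zk (ns (ms i))) s) ^ 2) ∂μ) atTop
      (𝓝 (∫ s, (a + b * (z s) ^ 2) ∂μ)) := by
    simp only [int_const_add_sq]
    exact (((h2.norm.pow 2)).const_mul b).const_add a
  refine genDCT (Fk := fun i s => h ((zk (ns (ms i))) s)) (F := fun s => h (z s))
    (gk := fun i s => a + b * ((zk (ns (ms i))) s) ^ 2) (g := fun s => a + b * (z s) ^ 2)
    (fun i => hh.comp_aestronglyMeasurable (Lp.aestronglyMeasurable _))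
    (hh.comp_aestronglyMeasurable (Lp.aestronglyMeasurable z))
    (fun i => (integrable_const a).add (((Lp.memLp _).integrable_sq).const_mul b))
    ((integrable_const a).add (((Lp.memLp z).integrable_sq).const_mul b))
    (fun i => Eventually.of_forall fun s => hbd _)
    ?_ ?_ hgi
  · filter_upwards [hae] with s hs
    exact (hh.tendsto _).comp hs
  · filter_upwards [hae] with s hs
    exact ((hs.pow 2).const_mul b).const_add a


/-- the truncated tail second moment functional on `L²`. -/
def tail (M : ℝ) (z : Lp ℝ 2 μ) : ℝ := ∫ s, (max (|z s| - M) 0) ^ 2 ∂μ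

lemma tail_comp_cont (M : ℝ) : Continuous fun x : ℝ => (max (|x| - M) 0) ^ 2 :=
  ((continuous_abs.sub continuous_const).max continuous_const).pow 2

lemma tail_comp_bound {M : ℝ} (hM : 0 ≤ M) (x : ℝ) :
    |(max (|x| - M) 0) ^ 2| ≤ 0 + 1 * x ^ 2 := by
  have h1 : max (|x| - M) 0 ≤ |x| := max_le (by linarith [abs_nonneg x]) (abs_nonneg x)
  have h0 : (0:ℝ) ≤ max (|x| - M) 0 := le_max_right _ _
  rw [abs_of_nonneg (by positivity)]
  nlinarith [sq_abs x]

set_option synthInstance.maxHeartbeats 1000000 in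
lemma tail_cont [IsProbabilityMeasure μ] {M : ℝ} (hM : 0 ≤ M) :
    Continuous (fun z : Lp ℝ 2 μ => tail M z) :=
  continuous_integral_comp _ (tail_comp_cont M) 0 1 (tail_comp_bound hM)

lemma tail_tendsto_zero [IsProbabilityMeasure μ] (z : Lp ℝ 2 μ) :
    Tendsto (fun k : ℕ => tail (k : ℝ) z) atTop (𝓝 0) := by
  have h := tendsto_integral_filter_of_dominated_convergence (μ := μ)
      (F := fun k : ℕ => fun s => (max (|z s| - (k : ℝ)) 0) ^ 2) (f := fun _ => (0:ℝ))
      (bound := fun s => (z s) ^ 2)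
      (Eventually.of_forall fun k =>
        (tail_comp_cont (k : ℝ)).comp_aestronglyMeasurable (Lp.aestronglyMeasurable z))
      (Eventually.of_forall fun k => Eventually.of_forall fun s => by
        simpa [Real.norm_eq_abs] using tail_comp_bound (M := (k:ℝ)) (Nat.cast_nonneg k) (z s))
      ((Lp.memLp z).integrable_sq)
      (Eventually.of_forall fun s => by
        obtain ⟨K, hK⟩ := exists_nat_ge (|z s|)
        have hev : ∀ᶠ k : ℕ in atTop, (max (|z s| - (k:ℝ)) 0) ^ 2 = 0 := by
          filter_upwards [eventually_ge_atTop K] with k hk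
          have hkK : (K : ℝ) ≤ (k : ℝ) := Nat.cast_le.2 hk
          have : |z s| - (k : ℝ) ≤ 0 := by linarith
          rw [max_eq_right this]
          simp
        exact Tendsto.congr' (hev.mono fun k hk => hk.symm) tendsto_const_nhds)
  simpa [tail] using h

/-- Core deterministic estimate. -/
lemma core [IsProbabilityMeasure μ] (r ε M : ℝ) (hr : 0 < r) (hε : 0 < ε) (hε2 : ε ≤ 1/2)
    (hM : 0 ≤ M) (hMr : 2 * M ≤ ε * r) (z : Lp ℝ 2 μ)
    (hz : ∀ᵐ s ∂μ, -r ≤ z s) (hmean : ∫ s, z s ∂μ = 0) :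
    |(∫ s, r ^ 2 * ((1 + z s / r) * Real.log (1 + z s / r)) ∂μ) - (1/2) * ‖z‖ ^ 2|
      ≤ 2 * ε * ‖z‖ ^ 2 + 6 * tail M z := by
  set q : ℝ → ℝ :=
    fun x => r ^ 2 * ((1 + x / r) * Real.log (1 + x / r)) - r * x - x ^ 2 / 2 with hqdef
  have hq : ∀ x : ℝ, -r ≤ x →
      |q x| ≤ 2 * ε * x ^ 2 + 6 * (max (|x| - M) 0) ^ 2 := by
    intro x hx
    set v := x / r with hv
    have hv1 : -1 ≤ v := by
      rw [hv, le_div_iff₀ hr]; linarith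
    have hxrv : x = r * v := by rw [hv]; field_simp
    rcases le_or_gt |x| (ε * r) with hc | hc
    · have hvsmall : |v| ≤ 1/2 := by
        rw [hv, abs_div, abs_of_pos hr, div_le_iff₀ hr]
        nlinarith
      have htay := psi_taylor hvsmall
      have habs3 : |x| ^ 3 ≤ (ε * r) * x ^ 2 := by
        have h1 : |x| ^ 3 = |x| * x ^ 2 := by rw [← sq_abs]; ring
        rw [h1]
        exact mul_le_mul_of_nonneg_right hc (sq_nonneg x)
      have hqv : q x = r ^ 2 * ((1 + v) * Real.log (1 + v) - v - v ^ 2 / 2) := by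
        simp only [hqdef]
        rw [hxrv]
        have hrne : r ≠ 0 := hr.ne'
        field_simp
      have hvx : |v| ^ 3 = |x| ^ 3 / r ^ 3 := by
        rw [hv, abs_div, abs_of_pos hr, div_pow]
      have h2 : |q x| ≤ r ^ 2 * (2 * |v| ^ 3) := by
        rw [hqv, abs_mul, abs_of_nonneg (by positivity : (0:ℝ) ≤ r ^ 2)]
        exact mul_le_mul_of_nonneg_left htay (by positivity)
      have h3 : r ^ 2 * (2 * |v| ^ 3) = 2 * |x| ^ 3 / r := by
        rw [hvx]; field_simp
      have h4 : 2 * |x| ^ 3 / r ≤ 2 * ε * x ^ 2 := by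
        rw [div_le_iff₀ hr]
        nlinarith
      have h5 : (0:ℝ) ≤ 6 * (max (|x| - M) 0) ^ 2 := by positivity
      linarith
    · have h2M : 2 * M ≤ |x| := le_trans hMr hc.le
      have hgm : x ^ 2 ≤ 4 * (max (|x| - M) 0) ^ 2 := by
        have h1 : |x| / 2 ≤ |x| - M := by linarith
        have h2 : |x| / 2 ≤ max (|x| - M) 0 := le_max_of_le_left h1
        nlinarith [sq_abs x, abs_nonneg x]
      have hpsi1 : 0 ≤ (1 + v) * Real.log (1 + v) - v := psi_nonneg hv1
      have hpsi2 : (1 + v) * Real.log (1 + v) - v ≤ v ^ 2 := psi_le_sq hv1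
      have hr2v : r ^ 2 * v ^ 2 = x ^ 2 := by rw [hxrv]; ring
      have hqv : q x = r ^ 2 * ((1 + v) * Real.log (1 + v) - v) - x ^ 2 / 2 := by
        simp only [hqdef]
        rw [hxrv]
        have hrne : r ≠ 0 := hr.ne'
        field_simp
      rw [abs_le]
      constructor
      · rw [hqv]; nlinarith [sq_nonneg x, sq_nonneg (max (|x| - M) 0)]
      · rw [hqv]
        have hle : r ^ 2 * ((1 + v) * Real.log (1 + v) - v) ≤ x ^ 2 := by
          rw [← hr2v]
          exact mul_le_mul_of_nonneg_left hpsi2 (by positivity)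
        nlinarith [sq_nonneg x]
  have hqcont : Continuous q := by
    have h0 : Continuous fun x : ℝ => (1:ℝ) + x / r := by fun_prop
    have h1 : Continuous fun x : ℝ => (1 + x / r) * Real.log (1 + x / r) := by
      simpa [Function.comp_def] using Real.continuous_mul_log.comp h0
    simp only [hqdef]
    fun_prop
  have hzint : Integrable (fun s => z s) μ := (Lp.memLp z).integrable one_le_two
  have hsqint : Integrable (fun s => (z s) ^ 2) μ := (Lp.memLp z).integrable_sq
  have hgmint : Integrable (fun s => (max (|z s| - M) 0) ^ 2) μ := by
    apply hsqint.mono' ((tail_comp_cont M).comp_aestronglyMeasurable (Lp.aestronglyMeasurable z))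
    refine Eventually.of_forall fun s => ?_
    have := tail_comp_bound hM (z s)
    rw [Real.norm_eq_abs]; linarith
  have hbint : Integrable (fun s => 2 * ε * (z s) ^ 2 + 6 * (max (|z s| - M) 0) ^ 2) μ :=
    (hsqint.const_mul (2 * ε)).add (hgmint.const_mul 6)
  have hbae : ∀ᵐ s ∂μ, |q (z s)| ≤ 2 * ε * (z s) ^ 2 + 6 * (max (|z s| - M) 0) ^ 2 :=
    hz.mono fun s hs => hq _ hs
  have hqint : Integrable (fun s => q (z s)) μ := by
    apply hbint.mono' (hqcont.comp_aestronglyMeasurable (Lp.aestronglyMeasurable z))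
    filter_upwards [hbae] with s hs
    rw [Real.norm_eq_abs]; exact hs
  have key : ∫ s, r ^ 2 * ((1 + z s / r) * Real.log (1 + z s / r)) ∂μ
      = ∫ s, q (z s) ∂μ + (r * ∫ s, z s ∂μ + (∫ s, (z s) ^ 2 ∂μ) / 2) := by
    have e : (fun s => r ^ 2 * ((1 + z s / r) * Real.log (1 + z s / r)))
        = fun s => q (z s) + (r * z s + (z s) ^ 2 / 2) := by
      funext s; simp only [hqdef]; ring
    have e1 : ∫ s, (q (z s) + (r * z s + (z s) ^ 2 / 2)) ∂μ
        = ∫ s, q (z s) ∂μ + ∫ s, (r * z s + (z s) ^ 2 / 2) ∂μ :=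
      integral_add (f := fun s => q (z s)) (g := fun s => r * z s + (z s) ^ 2 / 2)
        hqint ((hzint.const_mul r).add (hsqint.div_const 2))
    have e2 : ∫ s, (r * z s + (z s) ^ 2 / 2) ∂μ
        = ∫ s, r * z s ∂μ + ∫ s, (z s) ^ 2 / 2 ∂μ :=
      integral_add (f := fun s => r * z s) (g := fun s => (z s) ^ 2 / 2)
        (hzint.const_mul r) (hsqint.div_const 2)
    rw [e, e1, e2, integral_const_mul, integral_div]
  have habs2 : |∫ s, q (z s) ∂μ| ≤ ∫ s, (2 * ε * (z s) ^ 2 + 6 * (max (|z s| - M) 0) ^ 2) ∂μ := by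
    calc |∫ s, q (z s) ∂μ| ≤ ∫ s, |q (z s)| ∂μ := by
          simpa [Real.norm_eq_abs] using
            norm_integral_le_integral_norm (f := fun s => q (z s)) (μ := μ)
      _ ≤ _ := integral_mono_ae hqint.abs hbint hbae
  have hsplit : ∫ s, (2 * ε * (z s) ^ 2 + 6 * (max (|z s| - M) 0) ^ 2) ∂μ
      = 2 * ε * ‖z‖ ^ 2 + 6 * tail M z := by
    rw [integral_add (hsqint.const_mul (2 * ε)) (hgmint.const_mul 6), integral_const_mul,
      integral_const_mul, L2_norm_sq, tail]
  have hfin : (∫ s, r ^ 2 * ((1 + z s / r) * Real.log (1 + z s / r)) ∂μ) - (1/2) * ‖z‖ ^ 2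
      = ∫ s, q (z s) ∂μ := by
    rw [key, hmean, L2_norm_sq]; ring
  rw [hfin, ← hsplit]
  exact habs2


/-- continuous cutoff: `0` for `t ≤ a/2`, `1` for `t ≥ a`. -/
def cut (a t : ℝ) : ℝ := min 1 (max (2 * t / a - 1) 0)

lemma cut_nonneg (a t : ℝ) : 0 ≤ cut a t :=
  le_min zero_le_one (le_max_right _ _)

lemma cut_le_one (a t : ℝ) : cut a t ≤ 1 := min_le_left _ _

lemma cut_cont (a : ℝ) : Continuous (cut a) := by
  unfold cut; fun_prop

lemma cut_dist_le (a s t : ℝ) : dist (cut a s) (cut a t) ≤ 1 := by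
  rw [Real.dist_eq, abs_sub_le_iff]
  constructor <;> linarith [cut_nonneg a s, cut_nonneg a t, cut_le_one a s, cut_le_one a t]

lemma cut_mono {a : ℝ} (ha : 0 < a) {t t' : ℝ} (h : t ≤ t') : cut a t ≤ cut a t' := by
  unfold cut
  have h2 : 2 * t / a ≤ 2 * t' / a := by
    gcongr
  exact min_le_min le_rfl (max_le_max (by linarith) le_rfl)

lemma cut_eq_one {a t : ℝ} (ha : 0 < a) (h : a ≤ t) : cut a t = 1 := by
  unfold cut
  apply min_eq_left
  apply le_max_of_le_left
  have h2 : (2:ℝ) ≤ 2 * t / a := by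
    rw [le_div_iff₀ ha]; linarith
  linarith

lemma cut_eq_zero {a t : ℝ} (ha : 0 < a) (h : t ≤ a / 2) : cut a t = 0 := by
  unfold cut
  have h2 : 2 * t / a - 1 ≤ 0 := by
    rw [sub_nonpos, div_le_one ha]; linarith
  rw [max_eq_right h2]
  simp

/-- master pointwise inequality. -/
lemma master (f : BoundedContinuousFunction ℝ ℝ) {M δ η : ℝ} (hM : 1 ≤ M) (hδ : 0 < δ)
    (hδ1 : δ ≤ 1) (hη : 0 ≤ η)
    (hf : ∀ x ∈ Set.Icc (-M - 1) (M + 1), ∀ y ∈ Set.Icc (-M - 1) (M + 1),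
      dist x y < δ → dist (f x) (f y) < η)
    (x y : ℝ) (hy : 0 ≤ y) :
    |f x - f y| ≤ η + 2 * ‖f‖ * (cut (δ/2) |x - y| + cut (M/2) y) := by
  have hcn1 : 0 ≤ cut (δ/2) |x - y| := cut_nonneg _ _
  have hcn2 : 0 ≤ cut (M/2) y := cut_nonneg _ _
  have hFnn : (0:ℝ) ≤ ‖f‖ := norm_nonneg f
  by_cases hcase : |x - y| ≤ δ/2 ∧ y ≤ M/2
  · obtain ⟨h1, h2⟩ := hcase
    have hxy1 : x - y ≤ δ/2 := le_of_abs_le h1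
    have hxy2 : -(δ/2) ≤ x - y := neg_le_of_abs_le h1
    have hyI : y ∈ Set.Icc (-M - 1) (M + 1) := ⟨by linarith, by linarith⟩
    have hxI : x ∈ Set.Icc (-M - 1) (M + 1) := ⟨by linarith, by linarith⟩
    have := hf x hxI y hyI (by rw [Real.dist_eq]; linarith [abs_nonneg (x - y), le_of_abs_le h1, h1])
    rw [Real.dist_eq] at this
    nlinarith
  · have hone : 1 ≤ cut (δ/2) |x - y| + cut (M/2) y := by
      rcases le_or_gt |x - y| (δ/2) with h | h
      · have hy2 : M/2 < y := by
          by_contra hcon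
          push_neg at hcon
          exact hcase ⟨h, hcon⟩
        have he : cut (M/2) y = 1 := cut_eq_one (by linarith) hy2.le
        linarith
      · have he : cut (δ/2) |x - y| = 1 := cut_eq_one (by linarith) h.le
        linarith
    have h1 : |(f x : ℝ)| ≤ ‖f‖ := by
      simpa [Real.norm_eq_abs] using f.norm_coe_le_norm x
    have h2 : |(f y : ℝ)| ≤ ‖f‖ := by
      simpa [Real.norm_eq_abs] using f.norm_coe_le_norm y
    have h3 : |(f x : ℝ) - f y| ≤ |(f x : ℝ)| + |(f y : ℝ)| := by
      have := abs_add_le (f x : ℝ) (-(f y : ℝ)); simpa [sub_eq_add_neg] using this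
    nlinarith

end KLAux

noncomputable section


set_option maxHeartbeats 1000000 in
set_option synthInstance.maxHeartbeats 1000000 in
/-- One-sample null limit distribution for the KL divergence:
if `rₙ (p_{μₙ} − 1) →_w B` in `L²(μ)`, then `rₙ² KL(μₙ‖μ) →_d (1/2)‖B‖²_{L²(μ)}`. -/
theorem kl_one_sample_null
    {S : Type*} [MeasurableSpace S] (μ : Measure S) [IsProbabilityMeasure μ]
    {Ω : Type*} [MeasurableSpace Ω] (P : Measure Ω) [IsProbabilityMeasure P]
    -- the random probability measures μₙ
    (ζ : ℕ → Ω → Measure S)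
    (hζprob : ∀ n ω, IsProbabilityMeasure (ζ n ω))
    (hζmeas : ∀ n, ∀ C : Set S, MeasurableSet C → Measurable (fun ω => (ζ n ω C).toReal))
    -- their densities with respect to μ
    (p : ℕ → Ω → S → ℝ)
    -- almost surely, for all n sufficiently large, μₙ ≪ μ with density p n and KL(μₙ‖μ) < ∞
    (hdens : ∀ᵐ ω ∂P, ∀ᶠ n in atTop,
      ζ n ω = μ.withDensity (fun s => ENNReal.ofReal (p n ω s)) ∧
      (∀ᵐ s ∂μ, 0 ≤ p n ω s) ∧
      Integrable (fun s => p n ω s * Real.log (p n ω s)) μ)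
    (r : ℕ → ℝ) (hrpos : ∀ n, 0 < r n) (hr : Tendsto r atTop atTop)
    -- the L²(μ)-valued random elements rₙ (p_{μₙ} − 1), Borel measurably chosen
    (Z : ℕ → Ω → Lp ℝ 2 μ) (B : Ω → Lp ℝ 2 μ)
    (hZmeas : ∀ n, AEStronglyMeasurable (Z n) P)
    (hBmeas : AEStronglyMeasurable B P)
    (hZrep : ∀ n ω, (Z n ω : S → ℝ) =ᵐ[μ] fun s => r n * (p n ω s - 1))
    (hW : WeakConv P Z B) :
    WeakConv P
      (fun n ω => (r n) ^ 2 * ∫ s, p n ω s * Real.log (p n ω s) ∂μ)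
      (fun ω => (1 / 2) * ‖B ω‖ ^ 2) := by
  classical
  intro f
  set F := ‖f‖ with hFdef
  have hFnn : (0:ℝ) ≤ F := norm_nonneg f
  -- the functionals Φₙ on L²
  set Φ : ℕ → Lp ℝ 2 μ → ℝ :=
    fun n z => ∫ s, (r n) ^ 2 * ((1 + z s / r n) * Real.log (1 + z s / r n)) ∂μ with hΦ
  have hrep : ∀ n ω, (r n) ^ 2 * ∫ s, p n ω s * Real.log (p n ω s) ∂μ = Φ n (Z n ω) := by
    intro n ω
    rw [hΦ, ← integral_const_mul]
    apply integral_congr_ae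
    filter_upwards [hZrep n ω] with s hs
    have hrne : r n ≠ 0 := (hrpos n).ne'
    have h1 : 1 + (Z n ω : S → ℝ) s / r n = p n ω s := by
      rw [hs]; field_simp; ring
    rw [h1]
  have hΦcont : ∀ n, Continuous (Φ n) := by
    intro n
    have hrne : r n ≠ 0 := (hrpos n).ne'
    have h1 : Continuous fun x : ℝ => (1 + x / r n) * Real.log (1 + x / r n) := by
      have h0 : Continuous fun x : ℝ => (1:ℝ) + x / r n := by fun_prop
      simpa [Function.comp_def] using Real.continuous_mul_log.comp h0
    apply KLAux.continuous_integral_comp _ (continuous_const.mul h1) (2 * (r n) ^ 2) 2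
    intro x
    have h2 := KLAux.habs (x / r n)
    have h3 : |(r n) ^ 2 * ((1 + x / r n) * Real.log (1 + x / r n))|
        = (r n) ^ 2 * |(1 + x / r n) * Real.log (1 + x / r n)| := by
      rw [abs_mul, abs_of_nonneg (sq_nonneg (r n))]
    have h4 : (r n) ^ 2 * |(1 + x / r n) * Real.log (1 + x / r n)|
        ≤ (r n) ^ 2 * (2 + 2 * (x / r n) ^ 2) :=
      mul_le_mul_of_nonneg_left h2 (sq_nonneg (r n))
    have h5 : (r n) ^ 2 * (2 + 2 * (x / r n) ^ 2) = 2 * (r n) ^ 2 + 2 * x ^ 2 := by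
      field_simp
      try ring
    simp only [Pi.mul_apply]
    rw [h3]
    rw [h5] at h4
    exact h4
  -- abbreviations
  set aZ : ℕ → Ω → ℝ := fun n ω => Φ n (Z n ω) with haZ
  set bZ : ℕ → Ω → ℝ := fun n ω => (1/2) * ‖Z n ω‖ ^ 2 with hbZ
  set bB : Ω → ℝ := fun ω => (1/2) * ‖B ω‖ ^ 2 with hbB
  simp only [hrep]
  -- measurability
  have hmeas_aZ : ∀ n, AEStronglyMeasurable (aZ n) P := fun n =>
    (hΦcont n).comp_aestronglyMeasurable (hZmeas n)
  have hcont_half : Continuous fun z : Lp ℝ 2 μ => (1/2 : ℝ) * ‖z‖ ^ 2 :=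
    continuous_const.mul ((continuous_norm).pow 2)
  have hmeas_bZ : ∀ n, AEStronglyMeasurable (bZ n) P := fun n =>
    hcont_half.comp_aestronglyMeasurable (hZmeas n)
  have hmeas_bB : AEStronglyMeasurable bB P :=
    hcont_half.comp_aestronglyMeasurable hBmeas
  -- integrability of bounded AESM functions
  have int_bdd : ∀ (X : Ω → ℝ), AEStronglyMeasurable X P → ∀ (C : ℝ),
      (∀ ω, |X ω| ≤ C) → Integrable X P := by
    intro X hX C h
    exact (integrable_const C).mono' hX
      (Eventually.of_forall fun ω => by rw [Real.norm_eq_abs]; exact h ω)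
  -- Step A: convergence of the (1/2)‖Zₙ‖² part
  have hA : Tendsto (fun n => ∫ ω, f (bZ n ω) ∂P) atTop (𝓝 (∫ ω, f (bB ω) ∂P)) := by
    exact hW (f.compContinuous ⟨fun z : Lp ℝ 2 μ => (1/2 : ℝ) * ‖z‖ ^ 2, hcont_half⟩)
  -- Step B: the difference tends to zero in L¹(P)
  have hB : Tendsto (fun n => ∫ ω, |f (aZ n ω) - f (bZ n ω)| ∂P) atTop (𝓝 0) := by
    rw [NormedAddCommGroup.tendsto_nhds_zero]
    intro ρ hρ
    set ρ' := ρ / (4 * (1 + 10 * F)) with hρ'def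
    have hρ'pos : 0 < ρ' := by positivity
    -- B1 : choose M₁ = K₁
    have hJ : Tendsto (fun k : ℕ => ∫ ω, KLAux.cut ((k:ℝ)/2) (bB ω) ∂P) atTop (𝓝 0) := by
      have h := tendsto_integral_filter_of_dominated_convergence (μ := P)
        (F := fun k : ℕ => fun ω => KLAux.cut ((k:ℝ)/2) (bB ω)) (f := fun _ => (0:ℝ))
        (bound := fun _ => (1:ℝ))
        (Eventually.of_forall fun k =>
          (KLAux.cut_cont ((k:ℝ)/2)).comp_aestronglyMeasurable hmeas_bB)
        (Eventually.of_forall fun k => Eventually.of_forall fun ω => by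
          rw [Real.norm_eq_abs, abs_of_nonneg (KLAux.cut_nonneg _ _)]
          exact KLAux.cut_le_one _ _)
        (integrable_const 1)
        (Eventually.of_forall fun ω => by
          obtain ⟨K, hK⟩ := exists_nat_ge (4 * bB ω)
          have hev : ∀ᶠ k : ℕ in atTop, KLAux.cut ((k:ℝ)/2) (bB ω) = 0 := by
            filter_upwards [eventually_ge_atTop (K + 1)] with k hk
            have hk1 : (1:ℝ) ≤ (k:ℝ) := by exact_mod_cast Nat.one_le_iff_ne_zero.2 (by omega)
            have hkK : (K:ℝ) ≤ (k:ℝ) := by exact_mod_cast (by omega : K ≤ k)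
            exact KLAux.cut_eq_zero (by positivity) (by linarith)
          exact Tendsto.congr' (hev.mono fun k hk => hk.symm) tendsto_const_nhds)
      simpa using h
    obtain ⟨K₁, hK₁val, hK₁ge⟩ :
        ∃ k : ℕ, (∫ ω, KLAux.cut ((k:ℝ)/2) (bB ω) ∂P) < ρ' ∧ 1 ≤ k :=
      ((hJ.eventually (gt_mem_nhds hρ'pos)).and (eventually_ge_atTop 1)).exists
    set M₁ : ℝ := (K₁ : ℝ) with hM₁def
    have hM₁ge : (1:ℝ) ≤ M₁ := by rw [hM₁def]; exact_mod_cast hK₁ge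
    -- B2 : choose δ from uniform continuity of f on a compact interval
    have hunif := (isCompact_Icc (a := -M₁ - 1) (b := M₁ + 1)).uniformContinuousOn_of_continuous
      (f.continuous.continuousOn)
    rw [Metric.uniformContinuousOn_iff] at hunif
    obtain ⟨δ₀, hδ₀pos, hδ₀⟩ := hunif (ρ/4) (by positivity)
    set δ : ℝ := min δ₀ 1 with hδdef
    have hδpos : 0 < δ := lt_min hδ₀pos one_pos
    have hδ1 : δ ≤ 1 := min_le_right _ _
    have hδle : δ ≤ δ₀ := min_le_left _ _
    -- B3 : choose K₂ (giving ε and M₂)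
    have hWk : Tendsto (fun k : ℕ =>
        ∫ ω, KLAux.cut (δ/2) (2 * (1/((k:ℝ)+2)) * ‖B ω‖ ^ 2 + 6 * KLAux.tail (k:ℝ) (B ω)) ∂P)
        atTop (𝓝 0) := by
      have h := tendsto_integral_filter_of_dominated_convergence (μ := P)
        (F := fun k : ℕ => fun ω =>
          KLAux.cut (δ/2) (2 * (1/((k:ℝ)+2)) * ‖B ω‖ ^ 2 + 6 * KLAux.tail (k:ℝ) (B ω)))
        (f := fun _ => (0:ℝ)) (bound := fun _ => (1:ℝ))
        (Eventually.of_forall fun k => by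
          have hc : Continuous fun z : Lp ℝ 2 μ =>
              2 * (1/((k:ℝ)+2)) * ‖z‖ ^ 2 + 6 * KLAux.tail (k:ℝ) z :=
            (continuous_const.mul ((continuous_norm).pow 2)).add
              (continuous_const.mul (KLAux.tail_cont (Nat.cast_nonneg k)))
          exact (KLAux.cut_cont (δ/2)).comp_aestronglyMeasurable
            (hc.comp_aestronglyMeasurable hBmeas))
        (Eventually.of_forall fun k => Eventually.of_forall fun ω => by
          rw [Real.norm_eq_abs, abs_of_nonneg (KLAux.cut_nonneg _ _)]
          exact KLAux.cut_le_one _ _)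
        (integrable_const 1)
        (Eventually.of_forall fun ω => by
          have h1 : Tendsto (fun k : ℕ => 2 * (1/((k:ℝ)+2)) * ‖B ω‖ ^ 2) atTop (𝓝 0) := by
            have h2 : Tendsto (fun k : ℕ => ((k:ℝ)+2)) atTop atTop :=
              tendsto_atTop_add_const_right _ 2 tendsto_natCast_atTop_atTop
            have h3 : Tendsto (fun k : ℕ => 1/((k:ℝ)+2)) atTop (𝓝 0) := by
              simpa [one_div, Pi.inv_def] using h2.inv_tendsto_atTop
            have h4 := (h3.const_mul (2:ℝ)).mul_const (‖B ω‖ ^ 2)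
            simpa [mul_assoc] using h4
          have h5 : Tendsto (fun k : ℕ => 6 * KLAux.tail (k:ℝ) (B ω)) atTop (𝓝 0) := by
            have := (KLAux.tail_tendsto_zero (B ω)).const_mul (6:ℝ)
            simpa using this
          have h6 : Tendsto (fun k : ℕ =>
              2 * (1/((k:ℝ)+2)) * ‖B ω‖ ^ 2 + 6 * KLAux.tail (k:ℝ) (B ω)) atTop (𝓝 0) := by
            simpa using h1.add h5
          have hev : ∀ᶠ k : ℕ in atTop,
              KLAux.cut (δ/2) (2 * (1/((k:ℝ)+2)) * ‖B ω‖ ^ 2 + 6 * KLAux.tail (k:ℝ) (B ω)) = 0 := by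
            filter_upwards [h6.eventually (gt_mem_nhds (show (0:ℝ) < δ/4 by positivity))]
              with k hk
            exact KLAux.cut_eq_zero (by positivity) (by linarith)
          exact Tendsto.congr' (hev.mono fun k hk => hk.symm) tendsto_const_nhds)
      simpa using h
    obtain ⟨K₂, hK₂val⟩ :
        ∃ k : ℕ, (∫ ω, KLAux.cut (δ/2)
          (2 * (1/((k:ℝ)+2)) * ‖B ω‖ ^ 2 + 6 * KLAux.tail (k:ℝ) (B ω)) ∂P) < ρ' :=
      (hWk.eventually (gt_mem_nhds hρ'pos)).exists
    set ε : ℝ := 1/((K₂:ℝ)+2) with hεdef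
    set M₂ : ℝ := (K₂:ℝ) with hM₂def
    have hεpos : 0 < ε := by positivity
    have hεhalf : ε ≤ 1/2 := by
      rw [hεdef]
      rw [div_le_div_iff₀ (by positivity) (by norm_num)]
      have : (0:ℝ) ≤ (K₂:ℝ) := Nat.cast_nonneg _
      linarith
    have hM₂nn : (0:ℝ) ≤ M₂ := Nat.cast_nonneg _
    -- the two weak-convergence test functionals
    have hI₂ : Tendsto (fun n => ∫ ω, KLAux.cut (M₁/2) (bZ n ω) ∂P) atTop
        (𝓝 (∫ ω, KLAux.cut (M₁/2) (bB ω) ∂P)) := by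
      have hc : Continuous fun z : Lp ℝ 2 μ => KLAux.cut (M₁/2) ((1/2 : ℝ) * ‖z‖ ^ 2) :=
        (KLAux.cut_cont _).comp hcont_half
      exact hW (BoundedContinuousFunction.mkOfBound
        ⟨fun z : Lp ℝ 2 μ => KLAux.cut (M₁/2) ((1/2 : ℝ) * ‖z‖ ^ 2), hc⟩ 1
        (fun x y => KLAux.cut_dist_le _ _ _))
    have hcW : Continuous fun z : Lp ℝ 2 μ =>
        KLAux.cut (δ/2) (2 * ε * ‖z‖ ^ 2 + 6 * KLAux.tail M₂ z) :=
      (KLAux.cut_cont _).comp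
        ((continuous_const.mul ((continuous_norm).pow 2)).add
          (continuous_const.mul (KLAux.tail_cont hM₂nn)))
    have hI₁' : Tendsto
        (fun n => ∫ ω, KLAux.cut (δ/2) (2 * ε * ‖Z n ω‖ ^ 2 + 6 * KLAux.tail M₂ (Z n ω)) ∂P)
        atTop (𝓝 (∫ ω, KLAux.cut (δ/2) (2 * ε * ‖B ω‖ ^ 2 + 6 * KLAux.tail M₂ (B ω)) ∂P)) := by
      exact hW (BoundedContinuousFunction.mkOfBound
        ⟨fun z : Lp ℝ 2 μ => KLAux.cut (δ/2) (2 * ε * ‖z‖ ^ 2 + 6 * KLAux.tail M₂ z), hcW⟩ 1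
        (fun x y => KLAux.cut_dist_le _ _ _))
    have hI₁'lim : (∫ ω, KLAux.cut (δ/2) (2 * ε * ‖B ω‖ ^ 2 + 6 * KLAux.tail M₂ (B ω)) ∂P) < ρ' := by
      have : 2 * ε = 2 * (1/((K₂:ℝ)+2)) := by rw [hεdef]
      rw [hM₂def, this]
      exact hK₂val
    -- B4 : the remainder random variables vₙ
    set v : ℕ → Ω → ℝ := fun n ω =>
      max (KLAux.cut (δ/2) |aZ n ω - bZ n ω|
        - KLAux.cut (δ/2) (2 * ε * ‖Z n ω‖ ^ 2 + 6 * KLAux.tail M₂ (Z n ω))) 0 with hvdef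
    have hmeas_cutab : ∀ n, AEStronglyMeasurable
        (fun ω => KLAux.cut (δ/2) |aZ n ω - bZ n ω|) P := fun n =>
      (KLAux.cut_cont _).comp_aestronglyMeasurable
        (continuous_abs.comp_aestronglyMeasurable ((hmeas_aZ n).sub (hmeas_bZ n)))
    have hmeas_cutW : ∀ n, AEStronglyMeasurable
        (fun ω => KLAux.cut (δ/2) (2 * ε * ‖Z n ω‖ ^ 2 + 6 * KLAux.tail M₂ (Z n ω))) P :=
      fun n => hcW.comp_aestronglyMeasurable (hZmeas n)
    have hmeas_v : ∀ n, AEStronglyMeasurable (v n) P := fun n =>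
      (continuous_id.max continuous_const).comp_aestronglyMeasurable
        ((hmeas_cutab n).sub (hmeas_cutW n))
    have hv_bd : ∀ n ω, |v n ω| ≤ 1 := by
      intro n ω
      rw [hvdef]
      have h1 := KLAux.cut_nonneg (δ/2) |aZ n ω - bZ n ω|
      have h2 := KLAux.cut_le_one (δ/2) |aZ n ω - bZ n ω|
      have h3 := KLAux.cut_nonneg (δ/2) (2 * ε * ‖Z n ω‖ ^ 2 + 6 * KLAux.tail M₂ (Z n ω))
      have h4 := KLAux.cut_le_one (δ/2) (2 * ε * ‖Z n ω‖ ^ 2 + 6 * KLAux.tail M₂ (Z n ω))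
      rw [abs_le]
      constructor
      · simp only []
        have := le_max_right (KLAux.cut (δ/2) |aZ n ω - bZ n ω|
          - KLAux.cut (δ/2) (2 * ε * ‖Z n ω‖ ^ 2 + 6 * KLAux.tail M₂ (Z n ω))) (0:ℝ)
        linarith
      · simp only []
        apply max_le <;> linarith
    have hvlim : ∀ᵐ ω ∂P, Tendsto (fun n => v n ω) atTop (𝓝 (0:ℝ)) := by
      filter_upwards [hdens] with ω hω
      have hrev : ∀ᶠ n in atTop, 2 * M₂ ≤ ε * r n := by
        filter_upwards [hr.eventually_ge_atTop (2 * M₂ / ε)] with n hn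
        rw [div_le_iff₀ hεpos] at hn
        nlinarith [hn]
      have hev : ∀ᶠ n in atTop, v n ω = 0 := by
        filter_upwards [hω, hrev] with n hcond hεr
        obtain ⟨hζeq, hpos, _hint⟩ := hcond
        -- derive a.e. lower bound and zero mean for Z n ω
        have hz : ∀ᵐ s ∂μ, -(r n) ≤ (Z n ω : S → ℝ) s := by
          filter_upwards [hpos, hZrep n ω] with s h1 h2
          rw [h2]
          nlinarith [hrpos n]
        have hprob : IsProbabilityMeasure (ζ n ω) := hζprob n ω
        have h1 : ∫⁻ s, ENNReal.ofReal (p n ω s) ∂μ = 1 := by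
          have h2 := hprob.measure_univ
          rw [hζeq, withDensity_apply _ MeasurableSet.univ, Measure.restrict_univ] at h2
          exact h2
        have hpeq : (fun s => 1 + (Z n ω : S → ℝ) s / r n) =ᵐ[μ] p n ω := by
          filter_upwards [hZrep n ω] with s hs
          rw [hs]
          have hrne : r n ≠ 0 := (hrpos n).ne'
          field_simp
          ring
        have hpaesm : AEStronglyMeasurable (p n ω) μ :=
          (((continuous_const.add (continuous_id.div_const (r n))).comp_aestronglyMeasurable
            (Lp.aestronglyMeasurable (Z n ω)))).congr hpeq
        have hzint : Integrable (fun s => (Z n ω : S → ℝ) s) μ :=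
          (Lp.memLp (Z n ω)).integrable one_le_two
        have hpint : Integrable (p n ω) μ :=
          (((integrable_const (1:ℝ)).add (hzint.div_const (r n))).congr hpeq)
        have hpval : ∫ s, p n ω s ∂μ = 1 := by
          rw [integral_eq_lintegral_of_nonneg_ae hpos hpaesm, h1]
          simp
        have hmean : ∫ s, (Z n ω : S → ℝ) s ∂μ = 0 := by
          have e : ∫ s, (Z n ω : S → ℝ) s ∂μ = ∫ s, r n * (p n ω s - 1) ∂μ :=
            integral_congr_ae (hZrep n ω)
          rw [e, integral_const_mul, integral_sub hpint (integrable_const 1), hpval,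
            integral_const]
          simp
        have hcore := KLAux.core (μ := μ) (r n) ε M₂ (hrpos n) hεpos hεhalf hM₂nn hεr
          (Z n ω) hz hmean
        have hcutle : KLAux.cut (δ/2) |aZ n ω - bZ n ω|
            ≤ KLAux.cut (δ/2) (2 * ε * ‖Z n ω‖ ^ 2 + 6 * KLAux.tail M₂ (Z n ω)) :=
          KLAux.cut_mono (by positivity) hcore
        rw [hvdef]
        simp only []
        rw [max_eq_right (by linarith)]
      exact Tendsto.congr' (hev.mono fun n hn => hn.symm) tendsto_const_nhds
    have hv : Tendsto (fun n => ∫ ω, v n ω ∂P) atTop (𝓝 0) := by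
      have h := tendsto_integral_filter_of_dominated_convergence (μ := P)
        (F := v) (f := fun _ => (0:ℝ)) (bound := fun _ => (1:ℝ))
        (Eventually.of_forall hmeas_v)
        (Eventually.of_forall fun n => Eventually.of_forall fun ω => by
          rw [Real.norm_eq_abs]; exact hv_bd n ω)
        (integrable_const 1) hvlim
      simpa using h
    -- integrability of the various bounded integrands
    have int_fab : ∀ n, Integrable (fun ω => |f (aZ n ω) - f (bZ n ω)|) P := by
      intro n
      apply int_bdd _ (continuous_abs.comp_aestronglyMeasurable
        ((f.continuous.comp_aestronglyMeasurable (hmeas_aZ n)).sub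
          (f.continuous.comp_aestronglyMeasurable (hmeas_bZ n)))) (2 * F)
      intro ω
      rw [abs_abs]
      have h1 : |(f (aZ n ω) : ℝ)| ≤ F := by
        simpa [Real.norm_eq_abs] using f.norm_coe_le_norm (aZ n ω)
      have h2 : |(f (bZ n ω) : ℝ)| ≤ F := by
        simpa [Real.norm_eq_abs] using f.norm_coe_le_norm (bZ n ω)
      have h3 := abs_add_le ((f (aZ n ω)) : ℝ) (-(f (bZ n ω) : ℝ))
      rw [abs_neg] at h3
      calc |(f (aZ n ω) : ℝ) - f (bZ n ω)| ≤ |(f (aZ n ω) : ℝ)| + |(f (bZ n ω) : ℝ)| := by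
            simpa [sub_eq_add_neg] using h3
        _ ≤ 2 * F := by linarith
    have int_cutab : ∀ n, Integrable (fun ω => KLAux.cut (δ/2) |aZ n ω - bZ n ω|) P :=
      fun n => int_bdd _ (hmeas_cutab n) 1 (fun ω => by
        rw [abs_of_nonneg (KLAux.cut_nonneg _ _)]; exact KLAux.cut_le_one _ _)
    have int_cutW : ∀ n, Integrable
        (fun ω => KLAux.cut (δ/2) (2 * ε * ‖Z n ω‖ ^ 2 + 6 * KLAux.tail M₂ (Z n ω))) P :=
      fun n => int_bdd _ (hmeas_cutW n) 1 (fun ω => by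
        rw [abs_of_nonneg (KLAux.cut_nonneg _ _)]; exact KLAux.cut_le_one _ _)
    have int_cutb : ∀ n, Integrable (fun ω => KLAux.cut (M₁/2) (bZ n ω)) P :=
      fun n => int_bdd _ ((KLAux.cut_cont _).comp_aestronglyMeasurable (hmeas_bZ n)) 1
        (fun ω => by
          rw [abs_of_nonneg (KLAux.cut_nonneg _ _)]; exact KLAux.cut_le_one _ _)
    have int_v : ∀ n, Integrable (v n) P :=
      fun n => int_bdd _ (hmeas_v n) 1 (hv_bd n)
    -- the master bound, integrated
    have hmaster : ∀ n, (∫ ω, |f (aZ n ω) - f (bZ n ω)| ∂P)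
        ≤ ρ/4 + 2 * F * (∫ ω, KLAux.cut (δ/2) |aZ n ω - bZ n ω| ∂P)
          + 2 * F * (∫ ω, KLAux.cut (M₁/2) (bZ n ω) ∂P) := by
      intro n
      have hptwise : ∀ ω, |f (aZ n ω) - f (bZ n ω)|
          ≤ ρ/4 + 2 * F * (KLAux.cut (δ/2) |aZ n ω - bZ n ω| + KLAux.cut (M₁/2) (bZ n ω)) := by
        intro ω
        apply KLAux.master f hM₁ge hδpos hδ1 (by positivity)
          (fun x hx y hy hd => hδ₀ x hx y hy (lt_of_lt_of_le hd hδle))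
        rw [hbZ]
        positivity
      have hint : ∫ ω, (ρ/4 + 2 * F * (KLAux.cut (δ/2) |aZ n ω - bZ n ω|
          + KLAux.cut (M₁/2) (bZ n ω))) ∂P
          = ρ/4 + 2 * F * ((∫ ω, KLAux.cut (δ/2) |aZ n ω - bZ n ω| ∂P)
            + ∫ ω, KLAux.cut (M₁/2) (bZ n ω) ∂P) := by
        have e1 : ∫ ω, (ρ/4 + 2 * F * (KLAux.cut (δ/2) |aZ n ω - bZ n ω|
            + KLAux.cut (M₁/2) (bZ n ω))) ∂P
            = ∫ ω, (ρ/4 : ℝ) ∂P + ∫ ω, 2 * F * (KLAux.cut (δ/2) |aZ n ω - bZ n ω|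
              + KLAux.cut (M₁/2) (bZ n ω)) ∂P :=
          integral_add (integrable_const _)
            (Integrable.const_mul (f := fun ω => KLAux.cut (δ/2) |aZ n ω - bZ n ω|
              + KLAux.cut (M₁/2) (bZ n ω)) ((int_cutab n).add (int_cutb n)) _)
        have e2 : ∫ ω, 2 * F * (KLAux.cut (δ/2) |aZ n ω - bZ n ω|
            + KLAux.cut (M₁/2) (bZ n ω)) ∂P
            = 2 * F * ∫ ω, (KLAux.cut (δ/2) |aZ n ω - bZ n ω|
              + KLAux.cut (M₁/2) (bZ n ω)) ∂P := integral_const_mul _ _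
        have e3 : ∫ ω, (KLAux.cut (δ/2) |aZ n ω - bZ n ω|
            + KLAux.cut (M₁/2) (bZ n ω)) ∂P
            = (∫ ω, KLAux.cut (δ/2) |aZ n ω - bZ n ω| ∂P)
              + ∫ ω, KLAux.cut (M₁/2) (bZ n ω) ∂P :=
          integral_add (int_cutab n) (int_cutb n)
        rw [e1, e2, e3, integral_const]
        simp
      calc (∫ ω, |f (aZ n ω) - f (bZ n ω)| ∂P)
          ≤ ∫ ω, (ρ/4 + 2 * F * (KLAux.cut (δ/2) |aZ n ω - bZ n ω|
            + KLAux.cut (M₁/2) (bZ n ω))) ∂P :=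
            integral_mono (int_fab n)
              ((integrable_const _).add (((int_cutab n).add (int_cutb n)).const_mul _))
              hptwise
        _ = _ := by rw [hint]; ring
    -- pointwise : cut(δ/2)|a-b| ≤ v + cutW
    have hcut1 : ∀ n, (∫ ω, KLAux.cut (δ/2) |aZ n ω - bZ n ω| ∂P)
        ≤ (∫ ω, v n ω ∂P)
          + ∫ ω, KLAux.cut (δ/2) (2 * ε * ‖Z n ω‖ ^ 2 + 6 * KLAux.tail M₂ (Z n ω)) ∂P := by
      intro n
      rw [← integral_add (int_v n) (int_cutW n)]
      apply integral_mono (int_cutab n) ((int_v n).add (int_cutW n))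
      intro ω
      simp only [Pi.add_apply]
      have := le_max_left (KLAux.cut (δ/2) |aZ n ω - bZ n ω|
        - KLAux.cut (δ/2) (2 * ε * ‖Z n ω‖ ^ 2 + 6 * KLAux.tail M₂ (Z n ω))) (0:ℝ)
      rw [hvdef]
      simp only []
      linarith
    -- put everything together, eventually in n
    filter_upwards [hv.eventually (gt_mem_nhds hρ'pos),
      hI₂.eventually (gt_mem_nhds hK₁val),
      hI₁'.eventually (gt_mem_nhds hI₁'lim)] with n h1 h2 h3
    have h4 := hmaster n
    have h5 := hcut1 n
    have hnn : 0 ≤ ∫ ω, |f (aZ n ω) - f (bZ n ω)| ∂P :=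
      integral_nonneg fun ω => abs_nonneg _
    rw [Real.norm_eq_abs, abs_of_nonneg hnn]
    have hcb_nn : 0 ≤ ∫ ω, KLAux.cut (M₁/2) (bZ n ω) ∂P :=
      integral_nonneg fun ω => KLAux.cut_nonneg _ _
    have hca_nn : 0 ≤ ∫ ω, KLAux.cut (δ/2) |aZ n ω - bZ n ω| ∂P :=
      integral_nonneg fun ω => KLAux.cut_nonneg _ _
    have hρeq : ρ' * (4 * (1 + 10 * F)) = ρ := by
      rw [hρ'def]
      field_simp
    have hIa : (∫ ω, KLAux.cut (δ/2) |aZ n ω - bZ n ω| ∂P) ≤ ρ' + ρ' := le_trans h5 (by linarith)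
    have hA1 : 2 * F * (∫ ω, KLAux.cut (δ/2) |aZ n ω - bZ n ω| ∂P) ≤ 2 * F * (ρ' + ρ') :=
      mul_le_mul_of_nonneg_left hIa (by linarith)
    have hA2 : 2 * F * (∫ ω, KLAux.cut (M₁/2) (bZ n ω) ∂P) ≤ 2 * F * ρ' :=
      mul_le_mul_of_nonneg_left h2.le (by linarith)
    have hFρ' : 0 ≤ F * ρ' := mul_nonneg hFnn hρ'pos.le
    nlinarith [h4, hA1, hA2, hρ'pos, hFρ', hρeq]
  -- Step C : combine
  have hC : ∀ n, ‖(∫ ω, f (aZ n ω) ∂P) - ∫ ω, f (bZ n ω) ∂P‖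
      ≤ ∫ ω, |f (aZ n ω) - f (bZ n ω)| ∂P := by
    intro n
    have intfa : Integrable (fun ω => (f (aZ n ω) : ℝ)) P := by
      apply int_bdd _ (f.continuous.comp_aestronglyMeasurable (hmeas_aZ n)) F
      intro ω
      simpa [Real.norm_eq_abs] using f.norm_coe_le_norm (aZ n ω)
    have intfb : Integrable (fun ω => (f (bZ n ω) : ℝ)) P := by
      apply int_bdd _ (f.continuous.comp_aestronglyMeasurable (hmeas_bZ n)) F
      intro ω
      simpa [Real.norm_eq_abs] using f.norm_coe_le_norm (bZ n ω)
    rw [← integral_sub intfa intfb]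
    simpa [Real.norm_eq_abs] using
      norm_integral_le_integral_norm (f := fun ω => (f (aZ n ω) : ℝ) - f (bZ n ω)) (μ := P)
  have hD : Tendsto (fun n => (∫ ω, f (aZ n ω) ∂P) - ∫ ω, f (bZ n ω) ∂P) atTop (𝓝 0) :=
    squeeze_zero_norm hC hB
  have := hD.add hA
  simpa using this
end
end
end

section
/- One-sample limit distribution for χ² divergence under the alternative: Let ν be a probability measure on (S,𝒮), μ ≪ ν a probability measure with density p_μ and χ²(μ‖ν) < ∞, and (μ_n) random probability measures with, almost surely, μ_n ≪ ν with density p_{μ_n} and χ²(μ_n‖ν) < ∞ for all n sufficiently large. Let r_n → ∞. If the L²(ν)-valued random elements r_n(p_{μ_n} − p_μ) converge weakly to a random element B of L²(ν), then r_n(χ²(μ_n‖ν) − χ²(μ‖ν)) converges in distribution to 2∫_S B dμ = 2∫_S B·p_μ dν. -/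
open MeasureTheory Filter Topology

set_option synthInstance.maxHeartbeats 1000000
set_option maxHeartbeats 1600000

noncomputable section

lemma abs_mul_le_half_sq (a b : ℝ) : |a * b| ≤ (a ^ 2 + b ^ 2) / 2 := by
  rcases abs_cases (a * b) with ⟨h, _⟩ | ⟨h, _⟩ <;> nlinarith [sq_nonneg (a - b), sq_nonneg (a + b)]

section quad

variable {Ω : Type*} [MeasurableSpace Ω] {P : Measure Ω} [IsProbabilityMeasure P]
    {D : Type*} [NormedAddCommGroup D] [InnerProductSpace ℝ D]

/-- The bounded continuous cutoff function `z ↦ min (max (‖z‖ - K) 0) 1`. -/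
def cutoff (K : ℝ) : BoundedContinuousFunction D ℝ :=
  BoundedContinuousFunction.ofNormedAddCommGroup
    (fun z => min (max (‖z‖ - K) 0) 1)
    (by fun_prop) 1
    (by
      intro z
      rw [Real.norm_eq_abs, abs_le]
      constructor
      · have : (0:ℝ) ≤ min (max (‖z‖ - K) 0) 1 := le_min (le_max_right _ _) zero_le_one
        linarith
      · exact min_le_right _ _)

lemma cutoff_nonneg (K : ℝ) (z : D) : 0 ≤ cutoff K z :=
  le_min (le_max_right _ _) zero_le_one

lemma cutoff_le_one (K : ℝ) (z : D) : cutoff K z ≤ 1 := min_le_right _ _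

lemma cutoff_apply (K : ℝ) (z : D) : cutoff K z = min (max (‖z‖ - K) 0) 1 := rfl

lemma cutoff_eq_one {K : ℝ} {z : D} (h : K + 1 ≤ ‖z‖) : cutoff K z = 1 := by
  rw [cutoff_apply]
  exact min_eq_right (le_max_of_le_left (by linarith))

lemma cutoff_eq_zero {K : ℝ} {z : D} (h : ‖z‖ ≤ K) : cutoff K z = 0 := by
  rw [cutoff_apply, max_eq_right (by linarith : ‖z‖ - K ≤ 0)]
  simp

lemma weakConv_quad
    (Z : ℕ → Ω → D) (B : Ω → D)
    (hZ : ∀ n, AEStronglyMeasurable (Z n) P) (hB : AEStronglyMeasurable B P)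
    (g : D) (r : ℕ → ℝ) (hrpos : ∀ n, 0 < r n) (hr : Tendsto r atTop atTop)
    (hW : WeakConv P Z B) :
    WeakConv P (fun n ω => 2 * (inner ℝ g (Z n ω) : ℝ) + ‖Z n ω‖ ^ 2 / r n)
      (fun ω => 2 * (inner ℝ g (B ω) : ℝ)) := by
  intro f
  have hφcont : Continuous fun z : D => 2 * (inner ℝ g z : ℝ) :=
    continuous_const.mul (innerSL ℝ g).continuous
  set φ : C(D, ℝ) := ⟨fun z => 2 * (inner ℝ g z : ℝ), hφcont⟩ with hφ
  have hWf := hW (f.compContinuous φ)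
  have hHn : ∀ n, Continuous fun z : D => f (2 * (inner ℝ g z : ℝ) + ‖z‖ ^ 2 / r n) := by
    intro n
    exact f.continuous.comp (hφcont.add ((continuous_norm.pow 2).div_const _))
  have hmeasYn : ∀ n, AEStronglyMeasurable
      (fun ω => f (2 * (inner ℝ g (Z n ω) : ℝ) + ‖Z n ω‖ ^ 2 / r n)) P :=
    fun n => (hHn n).comp_aestronglyMeasurable (hZ n)
  have hmeasφn : ∀ n, AEStronglyMeasurable (fun ω => f (φ (Z n ω))) P :=
    fun n => (f.continuous.comp φ.continuous).comp_aestronglyMeasurable (hZ n)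
  have hintYn : ∀ n, Integrable
      (fun ω => f (2 * (inner ℝ g (Z n ω) : ℝ) + ‖Z n ω‖ ^ 2 / r n)) P :=
    fun n => (integrable_const ‖f‖).mono' (hmeasYn n)
      (Eventually.of_forall fun ω => f.norm_coe_le_norm _)
  have hintφn : ∀ n, Integrable (fun ω => f (φ (Z n ω))) P :=
    fun n => (integrable_const ‖f‖).mono' (hmeasφn n)
      (Eventually.of_forall fun ω => f.norm_coe_le_norm _)
  -- key : the difference tends to 0
  have key : Tendsto (fun n =>
      (∫ ω, f (2 * (inner ℝ g (Z n ω) : ℝ) + ‖Z n ω‖ ^ 2 / r n) ∂P)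
        - ∫ ω, f (φ (Z n ω)) ∂P) atTop (𝓝 0) := by
    rw [Metric.tendsto_atTop]
    intro ε hε
    set M := ‖f‖ with hMdef
    have hM : 0 ≤ M := norm_nonneg f
    set ε' : ℝ := ε / (2 * (1 + 4 * M)) with hε'def
    have hε' : 0 < ε' := by positivity
    -- choose K with ∫ cutoff K (B ω) < ε'
    have hGB : Tendsto (fun K : ℕ => ∫ ω, cutoff (K : ℝ) (B ω) ∂P) atTop (𝓝 0) := by
      have h0 : (0:ℝ) = ∫ _ω, (0:ℝ) ∂P := by simp
      rw [h0]
      apply tendsto_integral_of_dominated_convergence (fun _ => (1:ℝ))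
      · exact fun K => (cutoff (K:ℝ)).continuous.comp_aestronglyMeasurable hB
      · exact integrable_const 1
      · intro K
        refine Eventually.of_forall fun ω => ?_
        rw [Real.norm_eq_abs, abs_of_nonneg (cutoff_nonneg _ _)]
        exact cutoff_le_one _ _
      · refine Eventually.of_forall fun ω => ?_
        have : ∀ᶠ K : ℕ in atTop, cutoff (K:ℝ) (B ω) = 0 := by
          filter_upwards [eventually_ge_atTop (Nat.ceil (‖B ω‖))] with K hK
          exact cutoff_eq_zero (le_trans (Nat.le_ceil _) (by exact_mod_cast hK))
        exact Tendsto.congr' (this.mono fun K h => h.symm) tendsto_const_nhds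
    obtain ⟨K, hK⟩ : ∃ K : ℕ, ∫ ω, cutoff (K : ℝ) (B ω) ∂P < ε' := by
      exact (hGB.eventually (gt_mem_nhds hε')).exists
    have hWG := hW (cutoff (K:ℝ))
    have hev1 : ∀ᶠ n in atTop, ∫ ω, cutoff (K:ℝ) (Z n ω) ∂P < 2 * ε' :=
      hWG.eventually (gt_mem_nhds (by linarith))
    set R : ℝ := 2 * ‖g‖ * ((K:ℝ) + 1) + 1 with hRdef
    have hgnn : (0:ℝ) ≤ ‖g‖ := norm_nonneg g
    have hR : 1 ≤ R := by
      have : (0:ℝ) ≤ 2 * ‖g‖ * ((K:ℝ) + 1) := by positivity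
      rw [hRdef]; linarith
    have hUC := (isCompact_Icc (a := -(R+1)) (b := R+1)).uniformContinuousOn_of_continuous
      f.continuous.continuousOn
    rw [Metric.uniformContinuousOn_iff] at hUC
    obtain ⟨δ, hδ, hδ'⟩ := hUC ε' hε'
    have htend0 : Tendsto (fun n => ((K:ℝ)+1)^2 / r n) atTop (𝓝 0) :=
      Tendsto.div_atTop tendsto_const_nhds hr
    have hev2 : ∀ᶠ n in atTop, ((K:ℝ)+1)^2 / r n < min δ 1 :=
      htend0.eventually (gt_mem_nhds (lt_min hδ one_pos))
    obtain ⟨N, hN⟩ := eventually_atTop.mp (hev1.and hev2)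
    refine ⟨N, fun n hn => ?_⟩
    obtain ⟨h1, h2⟩ := hN n hn
    -- pointwise bound
    have hptw : ∀ ω, |f (2 * (inner ℝ g (Z n ω) : ℝ) + ‖Z n ω‖ ^ 2 / r n) - f (φ (Z n ω))|
        ≤ ε' + 2 * M * cutoff (K:ℝ) (Z n ω) := by
      intro ω
      set z := Z n ω with hz
      have hφz : φ z = 2 * (inner ℝ g z : ℝ) := rfl
      have hcutnn := cutoff_nonneg (K:ℝ) z
      by_cases hc : ‖z‖ ≤ (K:ℝ) + 1
      · have ha : |2 * (inner ℝ g z : ℝ)| ≤ R - 1 := by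
          rw [abs_mul, abs_two]
          have h3 := abs_real_inner_le_norm g z
          have h4 : ‖g‖ * ‖z‖ ≤ ‖g‖ * ((K:ℝ)+1) := by
            apply mul_le_mul_of_nonneg_left hc hgnn
          calc 2 * |(inner ℝ g z : ℝ)| ≤ 2 * (‖g‖ * ((K:ℝ)+1)) := by nlinarith
            _ = R - 1 := by rw [hRdef]; ring
        set t : ℝ := ‖z‖ ^ 2 / r n with ht
        have htnn : 0 ≤ t := div_nonneg (by positivity) (hrpos n).le
        have hnum : ‖z‖ ^ 2 ≤ ((K:ℝ)+1)^2 := by nlinarith [norm_nonneg z]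
        have htle : t ≤ ((K:ℝ)+1)^2 / r n := by
          rw [ht, div_le_div_iff_of_pos_right (hrpos n)]
          exact hnum
        have htlt : t < δ := lt_of_lt_of_le (htle.trans_lt h2) (min_le_left _ _)
        have htle1 : t ≤ 1 := ((htle.trans_lt h2).trans_le (min_le_right _ _)).le
        have hmem1 : φ z ∈ Set.Icc (-(R+1)) (R+1) := by
          rw [hφz]
          rw [abs_le] at ha
          constructor <;> [linarith [ha.1]; linarith [ha.2]]
        have hmem2 : 2 * (inner ℝ g z : ℝ) + t ∈ Set.Icc (-(R+1)) (R+1) := by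
          rw [abs_le] at ha
          constructor <;> [linarith [ha.1]; linarith [ha.2]]
        have hd := hδ' _ hmem2 _ hmem1 (by
          rw [Real.dist_eq, hφz]
          rw [show 2 * (inner ℝ g z : ℝ) + t - 2 * (inner ℝ g z : ℝ) = t by ring,
            abs_of_nonneg htnn]
          exact htlt)
        rw [Real.dist_eq] at hd
        have : 0 ≤ 2 * M * cutoff (K:ℝ) z := by positivity
        rw [ht] at hd
        linarith [hd]
      · push_neg at hc
        have hcut1 : cutoff (K:ℝ) z = 1 := cutoff_eq_one hc.le
        have hb1 : |f (2 * (inner ℝ g z : ℝ) + ‖z‖ ^ 2 / r n)| ≤ M := by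
          rw [← Real.norm_eq_abs]; exact f.norm_coe_le_norm _
        have hb2 : |f (φ z)| ≤ M := by
          rw [← Real.norm_eq_abs]; exact f.norm_coe_le_norm _
        rw [hcut1]
        calc |f (2 * (inner ℝ g z : ℝ) + ‖z‖ ^ 2 / r n) - f (φ z)|
            ≤ |f (2 * (inner ℝ g z : ℝ) + ‖z‖ ^ 2 / r n)| + |f (φ z)| := abs_sub _ _
          _ ≤ ε' + 2 * M * 1 := by linarith
    -- integrate the bound
    have hcutint : Integrable (fun ω => cutoff (K:ℝ) (Z n ω)) P :=
      (integrable_const (1:ℝ)).mono'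
        ((cutoff (K:ℝ)).continuous.comp_aestronglyMeasurable (hZ n))
        (Eventually.of_forall fun ω => by
          rw [Real.norm_eq_abs, abs_of_nonneg (cutoff_nonneg _ _)]; exact cutoff_le_one _ _)
    have hintdiff : Integrable (fun ω =>
        f (2 * (inner ℝ g (Z n ω) : ℝ) + ‖Z n ω‖ ^ 2 / r n) - f (φ (Z n ω))) P :=
      (hintYn n).sub (hintφn n)
    rw [Real.dist_0_eq_abs, ← integral_sub (hintYn n) (hintφn n)]
    have habs : |∫ ω, (f (2 * (inner ℝ g (Z n ω) : ℝ) + ‖Z n ω‖ ^ 2 / r n) - f (φ (Z n ω))) ∂P|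
        ≤ ∫ ω, |f (2 * (inner ℝ g (Z n ω) : ℝ) + ‖Z n ω‖ ^ 2 / r n) - f (φ (Z n ω))| ∂P := by
      simpa [Real.norm_eq_abs] using norm_integral_le_integral_norm
        (fun ω => f (2 * (inner ℝ g (Z n ω) : ℝ) + ‖Z n ω‖ ^ 2 / r n) - f (φ (Z n ω))) (μ := P)
    have hmono : ∫ ω, |f (2 * (inner ℝ g (Z n ω) : ℝ) + ‖Z n ω‖ ^ 2 / r n) - f (φ (Z n ω))| ∂P
        ≤ ∫ ω, (ε' + 2 * M * cutoff (K:ℝ) (Z n ω)) ∂P := by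
      apply integral_mono hintdiff.abs ((integrable_const ε').add (hcutint.const_mul _)) hptw
    have hre : ∫ ω, (ε' + 2 * M * cutoff (K:ℝ) (Z n ω)) ∂P
        = ε' + 2 * M * ∫ ω, cutoff (K:ℝ) (Z n ω) ∂P := by
      rw [integral_add (integrable_const ε') (hcutint.const_mul _), integral_const,
        integral_const_mul]
      simp
    have hcnn : 0 ≤ ∫ ω, cutoff (K:ℝ) (Z n ω) ∂P :=
      integral_nonneg fun ω => cutoff_nonneg _ _
    have hMc : 2 * M * ∫ ω, cutoff (K:ℝ) (Z n ω) ∂P ≤ 2 * M * (2 * ε') :=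
      mul_le_mul_of_nonneg_left h1.le (by positivity)
    have hfin : ε' + 2 * M * (2 * ε') < ε := by
      have h14 : (0:ℝ) < 1 + 4 * M := by linarith
      have he2 : ε' * (1 + 4 * M) = ε / 2 := by
        rw [hε'def]; field_simp
      have he3 : ε' + 2 * M * (2 * ε') = ε' * (1 + 4 * M) := by ring
      linarith
    linarith [habs.trans (hmono.trans_eq hre)]
  -- combine
  have hco : (⇑(f.compContinuous φ)) = fun x => f (φ x) := rfl
  have hWf' : Tendsto (fun n => ∫ ω, f (φ (Z n ω)) ∂P) atTop
      (𝓝 (∫ ω, f (φ (B ω)) ∂P)) := by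
    simpa only [hco] using hWf
  have hlim := key.add hWf'
  rw [zero_add] at hlim
  exact hlim.congr fun n => by ring

end quad

section aux

variable {S : Type*} [MeasurableSpace S]

lemma integrable_mul_of_sq {ν : Measure S} {q z : S → ℝ}
    (hq : Integrable (fun s => q s ^ 2) ν) (hz : Integrable (fun s => z s ^ 2) ν)
    (hm : AEStronglyMeasurable (fun s => q s * z s) ν) :
    Integrable (fun s => q s * z s) ν :=
  ((hq.add hz).div_const 2).mono' hm (Eventually.of_forall fun s => by
    rw [Real.norm_eq_abs]; exact abs_mul_le_half_sq _ _)

lemma isClosed_goodset (ν : Measure S) (q : S → ℝ) :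
    IsClosed {z : Lp ℝ 2 ν | AEStronglyMeasurable (fun s => q s * (z : S → ℝ) s) ν} := by
  apply IsSeqClosed.isClosed
  intro zs z hzs hz
  rw [tendsto_iff_edist_tendsto_0] at hz
  have h2 : Tendsto (fun n => eLpNorm ((zs n : S → ℝ) - (z : S → ℝ)) 2 ν) atTop (𝓝 0) := by
    simpa only [Lp.edist_def] using hz
  have h3 : TendstoInMeasure ν (fun n => (zs n : S → ℝ)) atTop (z : S → ℝ) :=
    tendstoInMeasure_of_tendsto_eLpNorm (by norm_num) (fun n => Lp.aestronglyMeasurable _)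
      (Lp.aestronglyMeasurable _) h2
  obtain ⟨ns, _, hae⟩ := h3.exists_seq_tendsto_ae
  refine aestronglyMeasurable_of_tendsto_ae atTop (fun i => hzs (ns i)) ?_
  filter_upwards [hae] with s hs
  exact hs.const_mul (q s)

lemma ofReal_eq_ofReal_max (a : ℝ) : ENNReal.ofReal a = ENNReal.ofReal (max a 0) := by
  rcases le_total 0 a with h | h
  · rw [max_eq_left h]
  · rw [max_eq_right h, ENNReal.ofReal_of_nonpos h, ENNReal.ofReal_zero]

lemma integral_zero_of_density {ν : Measure S}
    {pm w : S → ℝ} (hpm : ∀ s, 0 ≤ pm s)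
    (h1 : ∫⁻ s, ENNReal.ofReal (pm s) ∂ν = 1)
    (hw : Integrable w ν)
    (hpw : ∀ᵐ s ∂ν, 0 ≤ pm s + w s)
    (h2 : ∫⁻ s, ENNReal.ofReal (pm s + w s) ∂ν = 1) :
    ∫ s, w s ∂ν = 0 := by
  have hwm : AEMeasurable (fun s => ENNReal.ofReal (max (-w s) 0)) ν :=
    ENNReal.measurable_ofReal.comp_aemeasurable ((hw.aemeasurable.neg).max aemeasurable_const)
  have hwp : AEMeasurable (fun s => ENNReal.ofReal (max (w s) 0)) ν :=
    ENNReal.measurable_ofReal.comp_aemeasurable (hw.aemeasurable.max aemeasurable_const)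
  have key1 : (1 : ENNReal) + ∫⁻ s, ENNReal.ofReal (max (-w s) 0) ∂ν
      = 1 + ∫⁻ s, ENNReal.ofReal (max (w s) 0) ∂ν := by
    calc (1 : ENNReal) + ∫⁻ s, ENNReal.ofReal (max (-w s) 0) ∂ν
        = ∫⁻ s, (ENNReal.ofReal (pm s + w s) + ENNReal.ofReal (max (-w s) 0)) ∂ν := by
          rw [lintegral_add_right' _ hwm, h2]
      _ = ∫⁻ s, ENNReal.ofReal (pm s + max (w s) 0) ∂ν := by
          apply lintegral_congr_ae
          filter_upwards [hpw] with s hs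
          rw [← ENNReal.ofReal_add hs (le_max_right _ _)]
          congr 1
          rcases le_total (w s) 0 with h | h
          · rw [max_eq_left (neg_nonneg.mpr h), max_eq_right h]; ring
          · rw [max_eq_right (neg_nonpos.mpr h), max_eq_left h]; ring
      _ = ∫⁻ s, (ENNReal.ofReal (pm s) + ENNReal.ofReal (max (w s) 0)) ∂ν := by
          apply lintegral_congr_ae
          filter_upwards with s
          rw [← ENNReal.ofReal_add (hpm s) (le_max_right _ _)]
      _ = 1 + ∫⁻ s, ENNReal.ofReal (max (w s) 0) ∂ν := by
          rw [lintegral_add_right' _ hwp, h1]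
  have hfin : (1 : ENNReal) ≠ ⊤ := by norm_num
  have key2 := (ENNReal.add_right_inj hfin).mp key1
  rw [integral_eq_lintegral_pos_part_sub_lintegral_neg_part hw]
  have e1 : ∫⁻ s, ENNReal.ofReal (w s) ∂ν = ∫⁻ s, ENNReal.ofReal (max (w s) 0) ∂ν :=
    lintegral_congr fun s => ofReal_eq_ofReal_max _
  have e2 : ∫⁻ s, ENNReal.ofReal (-w s) ∂ν = ∫⁻ s, ENNReal.ofReal (max (-w s) 0) ∂ν :=
    lintegral_congr fun s => ofReal_eq_ofReal_max _
  rw [e1, e2, ← key2, sub_self]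

end aux


/-- One-sample limit distribution for the χ² divergence under the alternative:
if `rₙ (p_{μₙ} − p_μ) →_w B` in `L²(ν)`, then
`rₙ (χ²(μₙ‖ν) − χ²(μ‖ν)) →_d 2 ∫ B p_μ dν`. -/
theorem chisq_one_sample_alternative
    {S : Type*} [MeasurableSpace S] (ν : Measure S) [IsProbabilityMeasure ν]
    -- μ ≪ ν with density p_μ and χ²(μ‖ν) < ∞
    (μ : Measure S) [IsProbabilityMeasure μ] (pμ : S → ℝ) (hpμnn : ∀ s, 0 ≤ pμ s)
    (hμ : μ = ν.withDensity (fun s => ENNReal.ofReal (pμ s)))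
    (hchisq : Integrable (fun s => (pμ s - 1) ^ 2) ν)
    {Ω : Type*} [MeasurableSpace Ω] (P : Measure Ω) [IsProbabilityMeasure P]
    -- the random probability measures μₙ
    (ζ : ℕ → Ω → Measure S)
    (hζprob : ∀ n ω, IsProbabilityMeasure (ζ n ω))
    (hζmeas : ∀ n, ∀ C : Set S, MeasurableSet C → Measurable (fun ω => (ζ n ω C).toReal))
    -- their densities with respect to ν
    (p : ℕ → Ω → S → ℝ)
    -- almost surely, for all n sufficiently large, μₙ ≪ ν with density p n and χ²(μₙ‖ν) < ∞
    (hdens : ∀ᵐ ω ∂P, ∀ᶠ n in atTop,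
      ζ n ω = ν.withDensity (fun s => ENNReal.ofReal (p n ω s)) ∧
      (∀ᵐ s ∂ν, 0 ≤ p n ω s) ∧
      Integrable (fun s => (p n ω s - 1) ^ 2) ν)
    (r : ℕ → ℝ) (hrpos : ∀ n, 0 < r n) (hr : Tendsto r atTop atTop)
    -- the L²(ν)-valued random elements rₙ (p_{μₙ} − p_μ)
    (Z : ℕ → Ω → Lp ℝ 2 ν) (B : Ω → Lp ℝ 2 ν)
    (hZmeas : ∀ n, AEStronglyMeasurable (Z n) P)
    (hBmeas : AEStronglyMeasurable B P)
    (hZrep : ∀ n ω, (Z n ω : S → ℝ) =ᵐ[ν] fun s => r n * (p n ω s - pμ s))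
    (hW : WeakConv P Z B) :
    WeakConv P
      (fun n ω => r n * ((∫ s, (p n ω s - 1) ^ 2 ∂ν) - ∫ s, (pμ s - 1) ^ 2 ∂ν))
      (fun ω => 2 * ∫ s, (B ω : S → ℝ) s * pμ s ∂ν) := by
  classical
  set c : ℝ := ∫ s, (pμ s - 1) ^ 2 ∂ν with hc
  -- basic facts about q := pμ - 1
  have hqm : AEStronglyMeasurable (fun s => (pμ s - 1) ^ 2) ν := hchisq.aestronglyMeasurable
  have habsm : AEStronglyMeasurable (fun s => |pμ s - 1|) ν := by
    have he : (fun s => |pμ s - 1|) = fun s => Real.sqrt ((pμ s - 1) ^ 2) := by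
      funext s; rw [Real.sqrt_sq_eq_abs]
    rw [he]
    exact Real.continuous_sqrt.comp_aestronglyMeasurable hqm
  have habs2 : MemLp (fun s => |pμ s - 1|) 2 ν := by
    rw [memLp_two_iff_integrable_sq habsm]
    simpa [sq_abs] using hchisq
  set qL : Lp ℝ 2 ν := habs2.toLp _ with hqLdef
  -- integrability facts for Lp elements
  have hsq_int : ∀ z : Lp ℝ 2 ν, Integrable (fun s => (z : S → ℝ) s ^ 2) ν := fun z =>
    (memLp_two_iff_integrable_sq (Lp.aestronglyMeasurable z)).mp (Lp.memLp z)
  have hz_int : ∀ z : Lp ℝ 2 ν, Integrable (fun s => (z : S → ℝ) s) ν := fun z =>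
    (Lp.memLp z).integrable one_le_two
  -- the measurability set V
  set V : Set (Lp ℝ 2 ν) :=
    {z | AEStronglyMeasurable (fun s => (pμ s - 1) * (z : S → ℝ) s) ν} with hVdef
  have hVclosed : IsClosed V := isClosed_goodset ν _
  have hVmem_iff : ∀ z : Lp ℝ 2 ν,
      z ∈ V ↔ AEStronglyMeasurable (fun s => (pμ s - 1) * (z : S → ℝ) s) ν := fun z =>
    Iff.rfl
  have hint_qz : ∀ z : Lp ℝ 2 ν, z ∈ V →
      Integrable (fun s => (pμ s - 1) * (z : S → ℝ) s) ν := fun z hz =>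
    integrable_mul_of_sq hchisq (hsq_int z) ((hVmem_iff z).mp hz)
  have hV0 : (0 : Lp ℝ 2 ν) ∈ V := by
    rw [hVmem_iff]
    have h0 : (fun _ : S => (0:ℝ)) =ᵐ[ν]
        fun s => (pμ s - 1) * ((0 : Lp ℝ 2 ν) : S → ℝ) s := by
      filter_upwards [Lp.coeFn_zero ℝ 2 ν] with s hs
      rw [Pi.zero_apply] at hs
      rw [hs, mul_zero]
    exact aestronglyMeasurable_const.congr h0
  -- V as a submodule
  set V' : Submodule ℝ (Lp ℝ 2 ν) :=
    { carrier := V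
      add_mem' := by
        intro a b ha hb
        rw [Set.mem_setOf_eq] at ha hb ⊢
        refine (ha.add hb).congr ?_
        filter_upwards [Lp.coeFn_add a b] with s hs
        simp only [hs, Pi.add_apply]
        ring
      zero_mem' := hV0
      smul_mem' := by
        intro t a ha
        rw [Set.mem_setOf_eq] at ha ⊢
        refine (ha.const_mul t).congr ?_
        filter_upwards [Lp.coeFn_smul t a] with s hs
        simp only [hs, Pi.smul_apply, smul_eq_mul]
        ring } with hV'def
  have hmemV' : ∀ z : Lp ℝ 2 ν, z ∈ V → z ∈ V' := fun z hz => hz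
  have hmemV'2 : ∀ z : V', (z : Lp ℝ 2 ν) ∈ V := fun z => z.2
  haveI hVcomplete : CompleteSpace V' :=
    by haveI : IsClosed (V' : Set (Lp ℝ 2 ν)) := hVclosed
       exact IsClosed.completeSpace_coe (s := (V' : Set (Lp ℝ 2 ν)))
  -- the continuous linear functional z ↦ ∫ (pμ - 1) z on V'
  set φ₀ : V' →ₗ[ℝ] ℝ :=
    { toFun := fun z => ∫ s, (pμ s - 1) * ((z : Lp ℝ 2 ν) : S → ℝ) s ∂ν
      map_add' := by
        intro a b
        show ∫ s, (pμ s - 1) * ((((a : Lp ℝ 2 ν) + (b : Lp ℝ 2 ν)) : Lp ℝ 2 ν) : S → ℝ) s ∂ν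
          = (∫ s, (pμ s - 1) * ((a : Lp ℝ 2 ν) : S → ℝ) s ∂ν)
            + ∫ s, (pμ s - 1) * ((b : Lp ℝ 2 ν) : S → ℝ) s ∂ν
        have he : (fun s =>
            (pμ s - 1) * ((((a : Lp ℝ 2 ν) + (b : Lp ℝ 2 ν)) : Lp ℝ 2 ν) : S → ℝ) s) =ᵐ[ν]
            fun s => (pμ s - 1) * ((a : Lp ℝ 2 ν) : S → ℝ) s
              + (pμ s - 1) * ((b : Lp ℝ 2 ν) : S → ℝ) s := by
          filter_upwards [Lp.coeFn_add (a : Lp ℝ 2 ν) (b : Lp ℝ 2 ν)] with s hs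
          simp only [hs, Pi.add_apply]
          ring
        rw [integral_congr_ae he,
          integral_add (hint_qz _ (hmemV'2 a)) (hint_qz _ (hmemV'2 b))]
      map_smul' := by
        intro t a
        show ∫ s, (pμ s - 1) * (((t • (a : Lp ℝ 2 ν)) : Lp ℝ 2 ν) : S → ℝ) s ∂ν
          = (RingHom.id ℝ) t • ∫ s, (pμ s - 1) * ((a : Lp ℝ 2 ν) : S → ℝ) s ∂ν
        have he : (fun s =>
            (pμ s - 1) * (((t • (a : Lp ℝ 2 ν)) : Lp ℝ 2 ν) : S → ℝ) s) =ᵐ[ν]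
            fun s => t * ((pμ s - 1) * ((a : Lp ℝ 2 ν) : S → ℝ) s) := by
          filter_upwards [Lp.coeFn_smul t (a : Lp ℝ 2 ν)] with s hs
          simp only [hs, Pi.smul_apply, smul_eq_mul]
          ring
        rw [integral_congr_ae he, integral_const_mul]
        first
        | rfl
        | exact (smul_eq_mul _ _).symm
        | simp } with hφ₀def
  have hφ₀bound : ∀ z : V', ‖φ₀ z‖ ≤ ‖qL‖ * ‖z‖ := by
    intro z
    show ‖∫ s, (pμ s - 1) * ((z : Lp ℝ 2 ν) : S → ℝ) s ∂ν‖ ≤ ‖qL‖ * ‖z‖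
    set za : Lp ℝ 2 ν := ((Lp.memLp (z : Lp ℝ 2 ν)).norm).toLp _ with hza
    have h1 : ‖∫ s, (pμ s - 1) * ((z : Lp ℝ 2 ν) : S → ℝ) s ∂ν‖
        ≤ ∫ s, |pμ s - 1| * |((z : Lp ℝ 2 ν) : S → ℝ) s| ∂ν := by
      refine (norm_integral_le_integral_norm _).trans_eq ?_
      apply integral_congr_ae
      filter_upwards with s
      rw [Real.norm_eq_abs, abs_mul]
    have h2 : ∫ s, |pμ s - 1| * |((z : Lp ℝ 2 ν) : S → ℝ) s| ∂ν = (inner ℝ qL za : ℝ) := by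
      rw [L2.inner_def]
      apply integral_congr_ae
      filter_upwards [habs2.coeFn_toLp, ((Lp.memLp (z : Lp ℝ 2 ν)).norm).coeFn_toLp]
        with s hs1 hs2
      rw [RCLike.inner_apply, conj_trivial, hs1, hs2, Real.norm_eq_abs, mul_comm]
    have h3 : (inner ℝ qL za : ℝ) ≤ ‖qL‖ * ‖za‖ := real_inner_le_norm _ _
    have h4 : ‖za‖ = ‖(z : Lp ℝ 2 ν)‖ := by
      rw [hza, Lp.norm_toLp, eLpNorm_norm, ← Lp.norm_def]
    have h5 : ‖z‖ = ‖(z : Lp ℝ 2 ν)‖ := rfl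
    rw [h5, ← h4]
    linarith [h1, h3, h2.le, h2.ge]
  set φ : V' →L[ℝ] ℝ := φ₀.mkContinuous ‖qL‖ hφ₀bound with hφdef
  set g0 : V' := (InnerProductSpace.toDual ℝ V').symm φ with hg0def
  set gg : Lp ℝ 2 ν := (g0 : Lp ℝ 2 ν) with hggdef
  have hgg : ∀ z : Lp ℝ 2 ν, (hz : z ∈ V) →
      (inner ℝ gg z : ℝ) = ∫ s, (pμ s - 1) * (z : S → ℝ) s ∂ν := by
    intro z hz
    have h := InnerProductSpace.toDual_symm_apply (𝕜 := ℝ) (E := V') (y := φ)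
      (x := ⟨z, hmemV' z hz⟩)
    rw [Submodule.coe_inner] at h
    exact h
  -- the constant-one element of L²
  set onez : Lp ℝ 2 ν := (memLp_const (1:ℝ)).toLp _ with honezdef
  have h_onez : ∀ z : Lp ℝ 2 ν, (inner ℝ onez z : ℝ) = ∫ s, (z : S → ℝ) s ∂ν := by
    intro z
    rw [L2.inner_def]
    apply integral_congr_ae
    filter_upwards [(memLp_const (1:ℝ)).coeFn_toLp] with s hs
    rw [RCLike.inner_apply, conj_trivial, hs, mul_one]
  -- the good set W
  set W : Set (Lp ℝ 2 ν) := V ∩ {z | (inner ℝ onez z : ℝ) = 0} with hWdef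
  have hWclosed : IsClosed W :=
    hVclosed.inter (isClosed_eq (innerSL ℝ onez).continuous continuous_const)
  have hW0 : (0 : Lp ℝ 2 ν) ∈ W := ⟨hV0, inner_zero_right _⟩
  -- rewriting p n ω - 1 in terms of Z
  have hz_rw : ∀ n ω, (fun s => p n ω s - 1) =ᵐ[ν]
      fun s => (pμ s - 1) + (Z n ω : S → ℝ) s / r n := by
    intro n ω
    filter_upwards [hZrep n ω] with s hs
    rw [hs, mul_div_cancel_left₀ _ (hrpos n).ne']
    ring
  have hXeq : ∀ n ω, (∫ s, (p n ω s - 1) ^ 2 ∂ν)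
      = ∫ s, ((pμ s - 1) + (Z n ω : S → ℝ) s / r n) ^ 2 ∂ν := by
    intro n ω
    apply integral_congr_ae
    filter_upwards [hz_rw n ω] with s hs
    rw [hs]
  -- expansion of the square integral for z ∈ V
  have hexp : ∀ (z : Lp ℝ 2 ν), z ∈ V → ∀ n : ℕ,
      ∫ s, ((pμ s - 1) + (z : S → ℝ) s / r n) ^ 2 ∂ν
      = c + 2 * (∫ s, (pμ s - 1) * (z : S → ℝ) s ∂ν) / r n
        + (∫ s, (z : S → ℝ) s ^ 2 ∂ν) / (r n) ^ 2 := by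
    intro z hz n
    have hrn : r n ≠ 0 := (hrpos n).ne'
    have h1 : Integrable (fun s => 2 * ((pμ s - 1) * (z : S → ℝ) s) / r n) ν :=
      ((hint_qz z hz).const_mul 2).div_const _
    have h2 : Integrable (fun s => (z : S → ℝ) s ^ 2 / (r n) ^ 2) ν :=
      (hsq_int z).div_const _
    have he : (fun s => ((pμ s - 1) + (z : S → ℝ) s / r n) ^ 2)
        = fun s => (pμ s - 1) ^ 2
          + (2 * ((pμ s - 1) * (z : S → ℝ) s) / r n + (z : S → ℝ) s ^ 2 / (r n) ^ 2) := by
      funext s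
      field_simp
      ring
    have h12 : Integrable (fun s =>
        2 * ((pμ s - 1) * (z : S → ℝ) s) / r n + (z : S → ℝ) s ^ 2 / (r n) ^ 2) ν :=
      h1.add h2
    rw [he, integral_add hchisq h12, integral_add h1 h2, integral_div,
      integral_const_mul, integral_div, ← hc]
    ring
  -- membership of Z n ω in V given integrability
  have hmemVZ : ∀ n ω, Integrable (fun s => (p n ω s - 1) ^ 2) ν → Z n ω ∈ V := by
    intro n ω hInt
    rw [hVmem_iff]
    have hrn : r n ≠ 0 := (hrpos n).ne'
    have hm : AEStronglyMeasurable (fun s =>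
        r n / 2 * ((p n ω s - 1) ^ 2 - (pμ s - 1) ^ 2
          - ((Z n ω : S → ℝ) s / r n) * ((Z n ω : S → ℝ) s / r n))) ν := by
      apply AEStronglyMeasurable.const_mul
      have hZd : AEStronglyMeasurable (fun s => (Z n ω : S → ℝ) s / r n) ν := by
        have hdm : (fun s => (Z n ω : S → ℝ) s / r n)
            = fun s => (Z n ω : S → ℝ) s * (r n)⁻¹ := funext fun s => div_eq_mul_inv _ _
        rw [hdm]
        exact (Lp.aestronglyMeasurable (Z n ω)).mul aestronglyMeasurable_const
      exact (hInt.aestronglyMeasurable.sub hqm).sub (hZd.mul hZd)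
    refine hm.congr ?_
    filter_upwards [hz_rw n ω] with s hs
    rw [hs]
    field_simp
    ring
  have hXnot : ∀ n ω, Z n ω ∉ V → ∫ s, (p n ω s - 1) ^ 2 ∂ν = 0 := fun n ω hnot =>
    integral_undef (fun hInt => hnot (hmemVZ n ω hInt))
  -- Borel structure on L²
  letI : MeasurableSpace (Lp ℝ 2 ν) := borel _
  haveI : BorelSpace (Lp ℝ 2 ν) := ⟨rfl⟩
  -- the global functional Φ
  set Φ : ℕ → Lp ℝ 2 ν → ℝ := fun n z =>
    if z ∈ V then 2 * (inner ℝ gg z : ℝ) + ‖z‖ ^ 2 / r n else r n * (0 - c) with hΦdef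
  have hΦmeas : ∀ n, Measurable (Φ n) := by
    intro n
    exact Measurable.ite hVclosed.measurableSet
      (((continuous_const.mul (innerSL ℝ gg).continuous).add
        ((continuous_norm.pow 2).div_const _)).measurable) measurable_const
  have hnormsq : ∀ z : Lp ℝ 2 ν, ‖z‖ ^ 2 = ∫ s, (z : S → ℝ) s ^ 2 ∂ν := by
    intro z
    rw [← real_inner_self_eq_norm_sq, L2.inner_def]
    apply integral_congr_ae
    filter_upwards with s
    rw [RCLike.inner_apply, conj_trivial, pow_two]
  have hXΦ : ∀ n ω, r n * ((∫ s, (p n ω s - 1) ^ 2 ∂ν) - c) = Φ n (Z n ω) := by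
    intro n ω
    by_cases hv : Z n ω ∈ V
    · simp only [hΦdef, if_pos hv]
      rw [hXeq n ω, hexp _ hv n, hgg _ hv, hnormsq]
      have hrn : r n ≠ 0 := (hrpos n).ne'
      field_simp
      ring
    · simp only [hΦdef, if_neg hv]
      rw [hXnot n ω hv]
  -- a.e. measurability of f ∘ Xₙ
  have hfX : ∀ (f : BoundedContinuousFunction ℝ ℝ) n,
      AEStronglyMeasurable (fun ω => f (r n * ((∫ s, (p n ω s - 1) ^ 2 ∂ν) - c))) P := by
    intro f n
    have hmk := (hZmeas n).stronglyMeasurable_mk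
    have h1 : Measurable (fun ω => f (Φ n ((hZmeas n).mk (Z n) ω))) :=
      f.continuous.measurable.comp ((hΦmeas n).comp hmk.measurable)
    refine h1.aestronglyMeasurable.congr ?_
    filter_upwards [(hZmeas n).ae_eq_mk] with ω hω
    rw [hXΦ n ω, hω]
  -- the good event
  have hgood : ∀ᵐ ω ∂P, ∀ᶠ n in atTop, Z n ω ∈ W := by
    filter_upwards [hdens] with ω hω
    filter_upwards [hω] with n hn
    obtain ⟨h1, h2, h3⟩ := hn
    have hv : Z n ω ∈ V := hmemVZ n ω h3
    refine ⟨hv, ?_⟩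
    show (inner ℝ onez (Z n ω) : ℝ) = 0
    rw [h_onez]
    have hw_int : Integrable (fun s => (Z n ω : S → ℝ) s / r n) ν := (hz_int _).div_const _
    have hμ1 : ∫⁻ s, ENNReal.ofReal (pμ s) ∂ν = 1 := by
      have hm := measure_univ (μ := μ)
      rw [hμ, withDensity_apply _ MeasurableSet.univ, Measure.restrict_univ] at hm
      exact hm
    have hζ1 : ∫⁻ s, ENNReal.ofReal (p n ω s) ∂ν = 1 := by
      haveI := hζprob n ω
      have hm := measure_univ (μ := ζ n ω)
      rw [h1, withDensity_apply _ MeasurableSet.univ, Measure.restrict_univ] at hm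
      exact hm
    have hpw : ∀ᵐ s ∂ν, 0 ≤ pμ s + (Z n ω : S → ℝ) s / r n := by
      filter_upwards [h2, hz_rw n ω] with s hs1 hs2
      linarith [hs1, hs2]
    have h2' : ∫⁻ s, ENNReal.ofReal (pμ s + (Z n ω : S → ℝ) s / r n) ∂ν = 1 := by
      rw [← hζ1]
      apply lintegral_congr_ae
      filter_upwards [hz_rw n ω] with s hs
      rw [show pμ s + (Z n ω : S → ℝ) s / r n = p n ω s by linarith [hs]]
    have hzero := integral_zero_of_density hpμnn hμ1 hw_int hpw h2'
    have hr2 : ∫ s, (Z n ω : S → ℝ) s ∂ν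
        = r n * ∫ s, (Z n ω : S → ℝ) s / r n ∂ν := by
      rw [integral_div, ← mul_div_assoc, mul_div_cancel_left₀ _ (hrpos n).ne']
    rw [hr2, hzero, mul_zero]
  -- B lands in W almost surely
  set GW : BoundedContinuousFunction (Lp ℝ 2 ν) ℝ :=
    BoundedContinuousFunction.ofNormedAddCommGroup
      (fun z => min (Metric.infDist z W) 1)
      ((Metric.continuous_infDist_pt W).min continuous_const) 1
      (fun z => by
        rw [Real.norm_eq_abs, abs_of_nonneg (le_min Metric.infDist_nonneg zero_le_one)]
        exact min_le_right _ _) with hGWdef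
  have hGWapp : ∀ z, GW z = min (Metric.infDist z W) 1 := fun z => rfl
  have hGWnn : ∀ z, 0 ≤ GW z := fun z => le_min Metric.infDist_nonneg zero_le_one
  have hGW1 : ∀ z, GW z ≤ 1 := fun z => min_le_right _ _
  have hGWmem : ∀ z ∈ W, GW z = 0 := fun z hz => by
    rw [hGWapp, Metric.infDist_zero_of_mem hz]
    simp
  have hGB0 : ∫ ω, GW (B ω) ∂P = 0 := by
    have hlim1 : Tendsto (fun n => ∫ ω, GW (Z n ω) ∂P) atTop (𝓝 0) := by
      have h0 : (0:ℝ) = ∫ _ω, (0:ℝ) ∂P := by simp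
      rw [h0]
      apply tendsto_integral_of_dominated_convergence (fun _ => (1:ℝ))
      · exact fun n => GW.continuous.comp_aestronglyMeasurable (hZmeas n)
      · exact integrable_const 1
      · exact fun n => Eventually.of_forall fun ω => by
          rw [Real.norm_eq_abs, abs_of_nonneg (hGWnn _)]
          exact hGW1 _
      · filter_upwards [hgood] with ω hω
        apply Tendsto.congr' ?_ tendsto_const_nhds
        filter_upwards [hω] with n hn
        exact (hGWmem _ hn).symm
    exact tendsto_nhds_unique (hW GW) hlim1
  have hBW : ∀ᵐ ω ∂P, B ω ∈ W := by
    have hint : Integrable (fun ω => GW (B ω)) P := (integrable_const 1).mono'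
      (GW.continuous.comp_aestronglyMeasurable hBmeas)
      (Eventually.of_forall fun ω => by
        rw [Real.norm_eq_abs, abs_of_nonneg (hGWnn _)]
        exact hGW1 _)
    have h0 := (integral_eq_zero_iff_of_nonneg (fun ω => hGWnn (B ω)) hint).mp hGB0
    filter_upwards [h0] with ω hω
    have hd0 : Metric.infDist (B ω) W = 0 := by
      by_contra hne
      have hpos : 0 < Metric.infDist (B ω) W :=
        lt_of_le_of_ne Metric.infDist_nonneg (Ne.symm hne)
      have hGWB : min (Metric.infDist (B ω) W) 1 = 0 := by
        rw [← hGWapp]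
        exact hω
      exact absurd hGWB (ne_of_gt (lt_min hpos one_pos))
    have hmem := (Metric.mem_closure_iff_infDist_zero ⟨(0 : Lp ℝ 2 ν), hW0⟩).mpr hd0
    rwa [hWclosed.closure_eq] at hmem
  -- identification of the limit
  have hLB : ∀ᵐ ω ∂P, 2 * (∫ s, (B ω : S → ℝ) s * pμ s ∂ν)
      = 2 * (inner ℝ gg (B ω) : ℝ) := by
    filter_upwards [hBW] with ω hω
    obtain ⟨hv, hz0⟩ := hω
    have he : (fun s => (B ω : S → ℝ) s * pμ s)
        = fun s => (pμ s - 1) * (B ω : S → ℝ) s + (B ω : S → ℝ) s := by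
      funext s
      ring
    rw [he, integral_add (hint_qz _ hv) (hz_int _), ← hgg _ hv, ← h_onez, hz0, add_zero]
  -- the main convergence
  intro f
  have hquad := weakConv_quad Z B hZmeas hBmeas gg r hrpos hr hW f
  beta_reduce at hquad
  -- Step 1 : ∫ f(Xₙ) - ∫ f(Yₙ) → 0
  have hstep1 : Tendsto (fun n =>
      (∫ ω, f (r n * ((∫ s, (p n ω s - 1) ^ 2 ∂ν) - c)) ∂P)
      - ∫ ω, f (2 * (inner ℝ gg (Z n ω) : ℝ) + ‖Z n ω‖ ^ 2 / r n) ∂P) atTop (𝓝 0) := by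
    set Dn : ℕ → Set Ω := fun n => {ω | (hZmeas n).mk (Z n) ω ∉ W} with hDndef
    have hDmeas : ∀ n, MeasurableSet (Dn n) := fun n =>
      (hZmeas n).stronglyMeasurable_mk.measurable hWclosed.measurableSet.compl
    set En : ℕ → Set Ω := fun N => ⋃ n, ⋃ (_ : N ≤ n), Dn n with hEndef
    have hEnmeas : ∀ N, MeasurableSet (En N) := fun N =>
      MeasurableSet.iUnion fun n => MeasurableSet.iUnion fun _ => hDmeas n
    have hAnti : Antitone En := by
      intro a b hab
      refine Set.iUnion₂_subset fun n hn => ?_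
      exact Set.subset_iUnion₂ (s := fun n _ => Dn n) n (hab.trans hn)
    have hae : ∀ᵐ ω ∂P, ∃ N, ∀ n, N ≤ n → ω ∉ Dn n := by
      have hmk_ae : ∀ᵐ ω ∂P, ∀ n, Z n ω = (hZmeas n).mk (Z n) ω :=
        ae_all_iff.mpr fun n => (hZmeas n).ae_eq_mk
      filter_upwards [hgood, hmk_ae] with ω h1 h2
      obtain ⟨N, hN⟩ := eventually_atTop.mp h1
      refine ⟨N, fun n hn hcon => ?_⟩
      exact hcon (h2 n ▸ hN n hn)
    have hEn0 : P (⋂ N, En N) = 0 := by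
      apply measure_mono_null ?_ (ae_iff.mp hae)
      intro ω hω
      intro hQ
      obtain ⟨N, hN⟩ := hQ
      have hωN : ω ∈ En N := Set.mem_iInter.mp hω N
      obtain ⟨n, hn, hmem⟩ := Set.mem_iUnion₂.mp hωN
      exact hN n hn hmem
    have htend : Tendsto (fun N => P (En N)) atTop (𝓝 0) := by
      have h := tendsto_measure_iInter_atTop (μ := P)
        (fun N => (hEnmeas N).nullMeasurableSet) hAnti ⟨0, measure_ne_top P _⟩
      rwa [hEn0] at h
    have hPD : Tendsto (fun n => (P (Dn n)).toReal) atTop (𝓝 0) := by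
      have hle : ∀ n, P (Dn n) ≤ P (En n) := fun n =>
        measure_mono fun ω h => Set.mem_iUnion.mpr ⟨n, Set.mem_iUnion.mpr ⟨le_refl n, h⟩⟩
      have h1 : Tendsto (fun n => P (Dn n)) atTop (𝓝 0) :=
        tendsto_of_tendsto_of_tendsto_of_le_of_le tendsto_const_nhds htend
          (fun n => zero_le) hle
      have h2 := (ENNReal.tendsto_toReal (by norm_num : (0:ENNReal) ≠ ⊤)).comp h1
      exact h2
    have hb : Tendsto (fun n => (P (Dn n)).toReal * (2 * ‖f‖)) atTop (𝓝 0) := by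
      have := hPD.mul_const (2 * ‖f‖)
      simpa using this
    apply squeeze_zero_norm ?_ hb
    intro n
    have hYm : AEStronglyMeasurable
        (fun ω => f (2 * (inner ℝ gg (Z n ω) : ℝ) + ‖Z n ω‖ ^ 2 / r n)) P :=
      (f.continuous.comp ((continuous_const.mul (innerSL ℝ gg).continuous).add
        ((continuous_norm.pow 2).div_const _))).comp_aestronglyMeasurable (hZmeas n)
    have hYint : Integrable
        (fun ω => f (2 * (inner ℝ gg (Z n ω) : ℝ) + ‖Z n ω‖ ^ 2 / r n)) P :=
      (integrable_const ‖f‖).mono' hYm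
        (Eventually.of_forall fun ω => f.norm_coe_le_norm _)
    have hXint : Integrable
        (fun ω => f (r n * ((∫ s, (p n ω s - 1) ^ 2 ∂ν) - c))) P :=
      (integrable_const ‖f‖).mono' (hfX f n)
        (Eventually.of_forall fun ω => f.norm_coe_le_norm _)
    rw [Real.norm_eq_abs, ← integral_sub hXint hYint]
    have hbd : ∀ᵐ ω ∂P,
        |f (r n * ((∫ s, (p n ω s - 1) ^ 2 ∂ν) - c))
          - f (2 * (inner ℝ gg (Z n ω) : ℝ) + ‖Z n ω‖ ^ 2 / r n)|
        ≤ Set.indicator (Dn n) (fun _ => 2 * ‖f‖) ω := by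
      filter_upwards [(hZmeas n).ae_eq_mk] with ω hmk
      by_cases hωD : ω ∈ Dn n
      · rw [Set.indicator_of_mem hωD]
        have h1 : |f (r n * ((∫ s, (p n ω s - 1) ^ 2 ∂ν) - c))| ≤ ‖f‖ := by
          rw [← Real.norm_eq_abs]
          exact f.norm_coe_le_norm _
        have h2 : |f (2 * (inner ℝ gg (Z n ω) : ℝ) + ‖Z n ω‖ ^ 2 / r n)| ≤ ‖f‖ := by
          rw [← Real.norm_eq_abs]
          exact f.norm_coe_le_norm _
        calc |f (r n * ((∫ s, (p n ω s - 1) ^ 2 ∂ν) - c))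
              - f (2 * (inner ℝ gg (Z n ω) : ℝ) + ‖Z n ω‖ ^ 2 / r n)|
            ≤ |f (r n * ((∫ s, (p n ω s - 1) ^ 2 ∂ν) - c))|
              + |f (2 * (inner ℝ gg (Z n ω) : ℝ) + ‖Z n ω‖ ^ 2 / r n)| := abs_sub _ _
          _ ≤ 2 * ‖f‖ := by linarith
      · rw [Set.indicator_of_notMem hωD]
        have hmem : Z n ω ∈ W := by
          rw [hmk]
          exact not_not.mp hωD
        have hXY : r n * ((∫ s, (p n ω s - 1) ^ 2 ∂ν) - c)
            = 2 * (inner ℝ gg (Z n ω) : ℝ) + ‖Z n ω‖ ^ 2 / r n := by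
          rw [hXΦ n ω]
          simp only [hΦdef, if_pos hmem.1]
        rw [hXY, sub_self, abs_zero]
    have hindint : Integrable (Set.indicator (Dn n) (fun _ => 2 * ‖f‖)) P :=
      (integrable_const (2 * ‖f‖)).indicator (hDmeas n)
    calc |∫ ω, (f (r n * ((∫ s, (p n ω s - 1) ^ 2 ∂ν) - c))
          - f (2 * (inner ℝ gg (Z n ω) : ℝ) + ‖Z n ω‖ ^ 2 / r n)) ∂P|
        ≤ ∫ ω, |f (r n * ((∫ s, (p n ω s - 1) ^ 2 ∂ν) - c))
          - f (2 * (inner ℝ gg (Z n ω) : ℝ) + ‖Z n ω‖ ^ 2 / r n)| ∂P := by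
          rw [← Real.norm_eq_abs]
          refine (norm_integral_le_integral_norm _).trans_eq ?_
          apply integral_congr_ae
          exact Eventually.of_forall fun ω => Real.norm_eq_abs _
      _ ≤ ∫ ω, Set.indicator (Dn n) (fun _ => 2 * ‖f‖) ω ∂P :=
          integral_mono_ae (hXint.sub hYint).abs hindint hbd
      _ = (P (Dn n)).toReal * (2 * ‖f‖) := by
          rw [integral_indicator_const _ (hDmeas n)]
          simp [smul_eq_mul, measureReal_def]
  -- identify the limiting integral
  have hLint : (∫ ω, f (2 * ∫ s, (B ω : S → ℝ) s * pμ s ∂ν) ∂P)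
      = ∫ ω, f (2 * (inner ℝ gg (B ω) : ℝ)) ∂P := by
    apply integral_congr_ae
    filter_upwards [hLB] with ω hω
    rw [hω]
  show Tendsto (fun n => ∫ ω, f (r n * ((∫ s, (p n ω s - 1) ^ 2 ∂ν) - c)) ∂P) atTop
    (𝓝 (∫ ω, f (2 * ∫ s, (B ω : S → ℝ) s * pμ s ∂ν) ∂P))
  rw [hLint]
  have hcomb := hstep1.add hquad
  rw [zero_add] at hcomb
  exact hcomb.congr fun n => by ring
end
end

section
/- Generalized Slutsky theorem in L^r spaces: Let ρ be a σ-finite measure and let r, r' ∈ [1,∞] be conjugate indices (1/r + 1/r' = 1). (i) If f_n → f in L^r(ρ) and g_n → g in L^{r'}(ρ), then f_n g_n → f g in L¹(ρ). (ii) If 1 < r < ∞ (so 1 < r' < ∞), Y_n are random elements of L^r(ρ) with Y_n →_w Y, and Z_n are random elements of L^{r'}(ρ) with Z_n →_w z for a deterministic z ∈ L^{r'}(ρ), then Y_n Z_n →_w Y z in L¹(ρ). -/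
open MeasureTheory Filter Topology
open scoped ENNReal

set_option maxHeartbeats 1000000
noncomputable section

/-- Markov-type bound: a set on which a `[0,1]`-valued function is `≥ 1` has measure at most
the integral of the function. -/
lemma meas_le_integral_of_le {Ω : Type*} [MeasurableSpace Ω] {P : Measure Ω}
    [IsProbabilityMeasure P] {g : Ω → ℝ} (hg : AEStronglyMeasurable g P)
    (hg0 : ∀ ω, 0 ≤ g ω) (hg1 : ∀ ω, g ω ≤ 1) {A : Set Ω} (hA : ∀ ω ∈ A, 1 ≤ g ω) :
    P A ≤ ENNReal.ofReal (∫ ω, g ω ∂P) := by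
  have hae : g =ᵐ[P] hg.mk g := hg.ae_eq_mk
  have hmeas : StronglyMeasurable (hg.mk g) := hg.stronglyMeasurable_mk
  set B : Set Ω := {ω | 1 ≤ hg.mk g ω} with hBdef
  have hB : MeasurableSet B := measurableSet_le measurable_const hmeas.measurable
  have hAB : P A ≤ P B := by
    apply measure_mono_ae
    filter_upwards [hae] with ω hω hωA
    show 1 ≤ hg.mk g ω
    rw [← hω]; exact hA ω hωA
  have hint' : Integrable (hg.mk g) P := by
    refine Integrable.mono' (integrable_const 1) hmeas.aestronglyMeasurable ?_
    filter_upwards [hae] with ω hω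
    rw [← hω, Real.norm_eq_abs, abs_of_nonneg (hg0 ω)]
    exact hg1 ω
  have hkey : (P B).toReal ≤ ∫ ω, g ω ∂P := by
    rw [integral_congr_ae hae]
    have h1 : (P B).toReal = ∫ ω, B.indicator (fun _ => (1 : ℝ)) ω ∂P := by
      rw [integral_indicator_const _ hB]; simp; rfl
    rw [h1]
    refine integral_mono_ae ((integrable_const (1 : ℝ)).indicator hB) hint' ?_
    filter_upwards [hae] with ω hω
    by_cases h : ω ∈ B
    · rw [Set.indicator_of_mem h]; exact h
    · rw [Set.indicator_of_notMem h, ← hω]; exact hg0 ω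
  calc P A ≤ P B := hAB
    _ = ENNReal.ofReal (P B).toReal := (ENNReal.ofReal_toReal (measure_ne_top _ _)).symm
    _ ≤ _ := ENNReal.ofReal_le_ofReal hkey

/-- Weak convergence to a constant implies convergence in probability. -/
lemma inprob_of_weakconv_const {Ω D : Type*} [MeasurableSpace Ω] [PseudoMetricSpace D]
    {P : Measure Ω} [IsProbabilityMeasure P] {Zn : ℕ → Ω → D} {z : D}
    (hmeas : ∀ n, AEStronglyMeasurable (Zn n) P)
    (h : WeakConv P Zn (fun _ => z)) {η : ℝ} (hη : 0 < η) :
    Tendsto (fun n => P {ω | η ≤ dist (Zn n ω) z}) atTop (𝓝 0) := by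
  set f : D → ℝ := fun u => min (dist u z / η) 1 with hfdef
  have hf0 : ∀ u, 0 ≤ f u := fun u => le_min (div_nonneg dist_nonneg hη.le) one_pos.le
  have hf1 : ∀ u, f u ≤ 1 := fun u => min_le_right _ _
  have hfc : Continuous f :=
    (((continuous_id.dist continuous_const)).div_const η).min continuous_const
  set F : BoundedContinuousFunction D ℝ := BoundedContinuousFunction.ofNormedAddCommGroup f hfc 1
      (fun u => by rw [Real.norm_eq_abs, abs_of_nonneg (hf0 u)]; exact hf1 u) with hFdef
  have hFz : f z = 0 := by simp [hfdef, dist_self]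
  have hlim : Tendsto (fun n => ∫ ω, F (Zn n ω) ∂P) atTop (𝓝 0) := by
    have := h F
    have h0 : (∫ ω, F ((fun _ => z) ω) ∂P) = 0 := by
      simp only [hFdef, BoundedContinuousFunction.coe_ofNormedAddCommGroup, hFz]
      simp
    rwa [h0] at this
  rw [ENNReal.tendsto_nhds_zero]
  intro ε hε
  have hmin : 0 < min ε 1 := lt_min hε one_pos
  have hminT : (min ε 1) ≠ ⊤ := ne_top_of_le_ne_top (by simp) (min_le_right _ _)
  have hc : (0:ℝ) < (min ε 1).toReal := ENNReal.toReal_pos hmin.ne' hminT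
  filter_upwards [hlim.eventually_lt_const hc] with n hn
  have hb : P {ω | η ≤ dist (Zn n ω) z} ≤ ENNReal.ofReal (∫ ω, F (Zn n ω) ∂P) := by
    refine meas_le_integral_of_le (F.continuous.comp_aestronglyMeasurable (hmeas n))
      (fun ω => hf0 _) (fun ω => hf1 _) ?_
    intro ω hω
    exact le_min ((one_le_div hη).mpr hω) le_rfl
  refine hb.trans ?_
  calc ENNReal.ofReal (∫ ω, F (Zn n ω) ∂P) ≤ ENNReal.ofReal (min ε 1).toReal :=
        ENNReal.ofReal_le_ofReal hn.le
    _ = min ε 1 := ENNReal.ofReal_toReal hminT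
    _ ≤ ε := min_le_left _ _


/-- Tightness of norms from weak convergence. -/
lemma tight_of_weakconv' {Ω D : Type*} [MeasurableSpace Ω] [NormedAddCommGroup D]
    {P : Measure Ω} [IsProbabilityMeasure P] {Yn : ℕ → Ω → D} {Y : Ω → D}
    (hmYn : ∀ n, AEStronglyMeasurable (Yn n) P) (hmY : AEStronglyMeasurable Y P)
    (h : ∀ f : BoundedContinuousFunction D ℝ,
      Tendsto (fun n => ∫ ω, f (Yn n ω) ∂P) atTop (𝓝 (∫ ω, f (Y ω) ∂P)))
    {c : ℝ} (hc : 0 < c) :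
    ∃ M : ℝ, 0 < M ∧ ∀ᶠ n in atTop, P {ω | M ≤ ‖Yn n ω‖} ≤ ENNReal.ofReal c := by
  have hae : Y =ᵐ[P] hmY.mk Y := hmY.ae_eq_mk
  have hmeas : StronglyMeasurable (hmY.mk Y) := hmY.stronglyMeasurable_mk
  -- measure of {‖Y'‖ ≥ k} tends to 0
  set A : ℕ → Set Ω := fun k => {ω | (k : ℝ) ≤ ‖hmY.mk Y ω‖} with hAdef
  have hAmeas : ∀ k, MeasurableSet (A k) :=
    fun k => measurableSet_le measurable_const hmeas.norm.measurable
  have hAanti : Antitone A := by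
    intro j k hjk ω hω
    have hjk' : (j : ℝ) ≤ (k : ℝ) := Nat.cast_le.mpr hjk
    exact le_trans hjk' hω
  have hAinter : (⋂ k, A k) = ∅ := by
    ext ω
    simp only [Set.mem_iInter, Set.mem_empty_iff_false, iff_false, not_forall]
    obtain ⟨k, hk⟩ := exists_nat_gt ‖hmY.mk Y ω‖
    exact ⟨k, by simpa [hAdef] using hk⟩
  have htend : Tendsto (fun k => P (A k)) atTop (𝓝 0) := by
    have := tendsto_measure_iInter_atTop (μ := P) (fun k => (hAmeas k).nullMeasurableSet) hAanti
      ⟨0, measure_ne_top _ _⟩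
    rwa [hAinter, measure_empty] at this
  obtain ⟨k₀, hk₀⟩ := (ENNReal.tendsto_nhds_zero.mp htend (ENNReal.ofReal (c / 3))
    (by simp [hc])).exists
  -- bounded continuous test function
  set f : D → ℝ := fun y => min (max (‖y‖ - k₀) 0) 1 with hfdef
  have hf0 : ∀ u, 0 ≤ f u := fun u => le_min (le_max_right _ _) one_pos.le
  have hf1 : ∀ u, f u ≤ 1 := fun u => min_le_right _ _
  have hfc : Continuous f :=
    ((continuous_norm.sub continuous_const).max continuous_const).min continuous_const
  set F : BoundedContinuousFunction D ℝ := BoundedContinuousFunction.ofNormedAddCommGroup f hfc 1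
      (fun u => by rw [Real.norm_eq_abs, abs_of_nonneg (hf0 u)]; exact hf1 u) with hFdef
  -- ∫ F(Y) ≤ c/3 + c/3
  have hFY_int : Integrable (fun ω => F (Y ω)) P := by
    refine Integrable.mono' (integrable_const 1) (F.continuous.comp_aestronglyMeasurable hmY) ?_
    exact Eventually.of_forall fun ω => by
      show ‖f (Y ω)‖ ≤ 1
      rw [Real.norm_eq_abs, abs_of_nonneg (hf0 _)]; exact hf1 _
  have hind_int : Integrable ((A k₀).indicator (fun _ => (1:ℝ))) P :=
    (integrable_const (1 : ℝ)).indicator (hAmeas k₀)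
  have hFle : (∫ ω, F (Y ω) ∂P) ≤ c / 3 := by
    have h1 : (∫ ω, F (Y ω) ∂P) ≤ ∫ ω, (A k₀).indicator (fun _ => (1:ℝ)) ω ∂P := by
      refine integral_mono_ae hFY_int hind_int ?_
      filter_upwards [hae] with ω hω
      by_cases hmem : ω ∈ A k₀
      · rw [Set.indicator_of_mem hmem]; exact hf1 _
      · rw [Set.indicator_of_notMem hmem]
        have : ‖hmY.mk Y ω‖ < k₀ := not_le.mp hmem
        have h2 : ‖Y ω‖ - k₀ ≤ 0 := by rw [hω]; linarith
        show min (max (‖Y ω‖ - k₀) 0) 1 ≤ 0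
        simp [max_eq_right h2]
      
    have h2 : ∫ ω, (A k₀).indicator (fun _ => (1:ℝ)) ω ∂P = (P (A k₀)).toReal := by
      rw [integral_indicator_const _ (hAmeas k₀)]; simp; rfl
    have h3 : (P (A k₀)).toReal ≤ c / 3 := by
      have := ENNReal.toReal_mono ENNReal.ofReal_ne_top hk₀
      rwa [ENNReal.toReal_ofReal (by linarith)] at this
    linarith [h1.trans_eq h2]
  refine ⟨k₀ + 1, by positivity, ?_⟩
  have hev : ∀ᶠ n in atTop, (∫ ω, F (Yn n ω) ∂P) < c := by
    refine (h F).eventually_lt_const ?_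
    calc (∫ ω, F (Y ω) ∂P) ≤ c / 3 := hFle
      _ < c := by linarith
  filter_upwards [hev] with n hn
  have hb : P {ω | k₀ + 1 ≤ ‖Yn n ω‖} ≤ ENNReal.ofReal (∫ ω, F (Yn n ω) ∂P) := by
    refine meas_le_integral_of_le (F.continuous.comp_aestronglyMeasurable (hmYn n))
      (fun ω => hf0 _) (fun ω => hf1 _) ?_
    intro ω hω
    refine le_min (le_max_iff.mpr (Or.inl (by
      have : (k₀:ℝ) + 1 ≤ ‖Yn n ω‖ := hω
      linarith))) le_rfl
  exact hb.trans (by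
    calc ENNReal.ofReal (∫ ω, F (Yn n ω) ∂P) ≤ ENNReal.ofReal c :=
      ENNReal.ofReal_le_ofReal hn.le
    _ = _ := rfl)



lemma enn_liminf_le_of_le_add (u v w : ℕ → ℝ≥0∞) (h : ∀ n, u n ≤ v n + w n)
    (hv : Tendsto v atTop (𝓝 0)) : atTop.liminf u ≤ atTop.liminf w := by
  refine ENNReal.le_of_forall_pos_le_add ?_
  intro ε hε hw
  have hev : ∀ᶠ n in atTop, u n ≤ w n + ε := by
    filter_upwards [ENNReal.tendsto_nhds_zero.mp hv ε (by exact_mod_cast hε)] with n hn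
    calc u n ≤ v n + w n := h n
      _ ≤ ε + w n := by gcongr
      _ = w n + ε := add_comm _ _
  have h1 : atTop.liminf u ≤ atTop.liminf (fun n => w n + ε) := liminf_le_liminf hev
  have h2 : atTop.liminf (fun n => w n + (ε:ℝ≥0∞)) = atTop.liminf w + ε := by
    have hmono : Monotone (fun x : ℝ≥0∞ => x + (ε:ℝ≥0∞)) := fun a b hab => add_le_add hab le_rfl
    exact (hmono.map_liminf_of_continuousAt w (by fun_prop)).symm
  rw [h2] at h1
  exact h1

/-- Slutsky-type lemma: if `Xₙ →_w L` and `dist (Xₙ, X'ₙ) → 0` in probability,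
then `X'ₙ →_w L`. -/
lemma weakconv_of_inprob {Ω D : Type*} [MeasurableSpace Ω] [PseudoMetricSpace D]
    [MeasurableSpace D] [BorelSpace D]
    {P : Measure Ω} [IsProbabilityMeasure P] {X X' : ℕ → Ω → D} {L : Ω → D}
    (hX : ∀ n, AEMeasurable (X n) P) (hX' : ∀ n, AEMeasurable (X' n) P)
    (hL : AEMeasurable L P) (hconv : WeakConv P X L)
    (hprob : ∀ δ : ℝ, 0 < δ →
      Tendsto (fun n => P {ω | δ ≤ dist (X n ω) (X' n ω)}) atTop (𝓝 0)) :
    WeakConv P X' L := by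
  haveI h1 : ∀ n, IsProbabilityMeasure (P.map (X n)) := fun n => Measure.isProbabilityMeasure_map (hX n)
  haveI h2 : ∀ n, IsProbabilityMeasure (P.map (X' n)) := fun n => Measure.isProbabilityMeasure_map (hX' n)
  haveI h3 : IsProbabilityMeasure (P.map L) := Measure.isProbabilityMeasure_map hL
  set νn : ℕ → ProbabilityMeasure D := fun n => ⟨P.map (X n), h1 n⟩ with hνn
  set ν'n : ℕ → ProbabilityMeasure D := fun n => ⟨P.map (X' n), h2 n⟩ with hν'n
  set ν : ProbabilityMeasure D := ⟨P.map L, h3⟩ with hν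
  have hνconv : Tendsto νn atTop (𝓝 ν) := by
    rw [ProbabilityMeasure.tendsto_iff_forall_integral_tendsto]
    intro f
    have hmapn : ∀ n, ∫ x, f x ∂(νn n : Measure D) = ∫ ω, f (X n ω) ∂P := fun n =>
      integral_map (hX n) f.continuous.aestronglyMeasurable
    have hmapL : ∫ x, f x ∂(ν : Measure D) = ∫ ω, f (L ω) ∂P :=
      integral_map hL f.continuous.aestronglyMeasurable
    simp only [hmapn, hmapL]
    exact hconv f
  have hopens : ∀ G, IsOpen G →
      (ν : Measure D) G ≤ atTop.liminf (fun n => (ν'n n : Measure D) G) := by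
    intro G hG
    rcases Set.eq_empty_or_nonempty Gᶜ with hGc | hGc
    · have hGuniv : G = Set.univ := by
        rw [← Set.compl_empty_iff]; exact hGc
      subst hGuniv
      simp only [measure_univ]
      have : atTop.liminf (fun _ : ℕ => (1 : ℝ≥0∞)) = 1 := liminf_const 1
      rw [this]
    · have hkey : ∀ δ : ℝ, 0 < δ → (ν : Measure D) {x | δ < Metric.infDist x Gᶜ}
          ≤ atTop.liminf (fun n => (ν'n n : Measure D) G) := by
        intro δ hδ
        set Gd := {x | δ < Metric.infDist x Gᶜ} with hGd
        have hGd_open : IsOpen Gd := isOpen_lt continuous_const (Metric.continuous_infDist_pt Gᶜ)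
        have step1 : (ν : Measure D) Gd ≤ atTop.liminf (fun n => (νn n : Measure D) Gd) :=
          ProbabilityMeasure.le_liminf_measure_open_of_tendsto hνconv hGd_open
        have step2 : ∀ n, (νn n : Measure D) Gd ≤
            P {ω | δ ≤ dist (X n ω) (X' n ω)} + (ν'n n : Measure D) G := by
          intro n
          have e1 : (νn n : Measure D) Gd = P (X n ⁻¹' Gd) :=
            Measure.map_apply_of_aemeasurable (hX n) hGd_open.measurableSet
          have e2 : (ν'n n : Measure D) G = P (X' n ⁻¹' G) :=
            Measure.map_apply_of_aemeasurable (hX' n) hG.measurableSet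
          rw [e1, e2]
          refine le_trans (measure_mono ?_) (measure_union_le _ _)
          intro ω hω
          by_cases hd : δ ≤ dist (X n ω) (X' n ω)
          · exact Or.inl hd
          · refine Or.inr ?_
            push_neg at hd
            by_contra hmem
            have hbound : Metric.infDist (X n ω) Gᶜ ≤ dist (X n ω) (X' n ω) :=
              Metric.infDist_le_dist_of_mem hmem
            have : Metric.infDist (X n ω) Gᶜ < δ := hbound.trans_lt hd
            exact absurd hω (by simpa [hGd] using this.not_gt)
        have step3 : atTop.liminf (fun n => (νn n : Measure D) Gd)
            ≤ atTop.liminf (fun n => (ν'n n : Measure D) G) :=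
          enn_liminf_le_of_le_add _ _ _ step2 (hprob δ hδ)
        exact step1.trans step3
      -- G is the increasing union of the sets Gd (1/(k+1))
      have hunion : G = ⋃ k : ℕ, {x | (1:ℝ)/(k+1) < Metric.infDist x Gᶜ} := by
        ext x
        constructor
        · intro hx
          have hxnot : x ∉ Gᶜ := by simpa using hx
          have hpos : 0 < Metric.infDist x Gᶜ :=
            (hG.isClosed_compl.notMem_iff_infDist_pos hGc).mp hxnot
          obtain ⟨k, hk⟩ := exists_nat_one_div_lt hpos
          exact Set.mem_iUnion.mpr ⟨k, by exact_mod_cast hk⟩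
        · intro hx
          obtain ⟨k, hk⟩ := Set.mem_iUnion.mp hx
          by_contra hxG
          have h0 : Metric.infDist x Gᶜ = 0 := Metric.infDist_zero_of_mem (by simpa using hxG)
          rw [Set.mem_setOf_eq, h0] at hk
          have : (0:ℝ) < 1/(k+1) := by positivity
          linarith
      have hmono : Monotone (fun k : ℕ => {x | (1:ℝ)/(k+1) < Metric.infDist x Gᶜ}) := by
        intro j k hjk x hx
        have : (1:ℝ)/(k+1) ≤ 1/(j+1) := by
          apply one_div_le_one_div_of_le
          · positivity
          · have : (j:ℝ) ≤ k := Nat.cast_le.mpr hjk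
            linarith
        exact lt_of_le_of_lt this hx
      have htendU := tendsto_measure_iUnion_atTop (μ := (ν : Measure D)) hmono
      conv_lhs => rw [hunion]
      refine le_of_tendsto htendU (Eventually.of_forall ?_)
      intro k
      exact hkey (1/(k+1)) (by positivity)
  have hconv' : Tendsto ν'n atTop (𝓝 ν) := by
    apply tendsto_of_forall_isOpen_le_liminf
    intro G hG
    have h := hopens G hG
    have aux : ENNReal.ofNNReal (liminf (fun n => ν'n n G) atTop) =
        liminf (ENNReal.ofNNReal ∘ fun n => ν'n n G) atTop := by
      refine Monotone.map_liminf_of_continuousAt (F := atTop) ENNReal.coe_mono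
        (fun n => ν'n n G) ?_ ?_ ?_
      · exact ENNReal.continuous_coe.continuousAt
      · exact IsBoundedUnder.isCoboundedUnder_ge ⟨1, eventually_map.mpr (Eventually.of_forall
          (fun n => ProbabilityMeasure.apply_le_one _ _))⟩
      · exact ⟨0, eventually_map.mpr (Eventually.of_forall (fun n => zero_le))⟩
    rw [← ENNReal.coe_le_coe, aux]
    simp only [Function.comp_def, ProbabilityMeasure.ennreal_coeFn_eq_coeFn_toMeasure]
    exact h
  intro f
  have hint := ProbabilityMeasure.tendsto_iff_forall_integral_tendsto.mp hconv' f
  have hmapn : ∀ n, ∫ x, f x ∂(ν'n n : Measure D) = ∫ ω, f (X' n ω) ∂P := fun n =>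
    integral_map (hX' n) f.continuous.aestronglyMeasurable
  have hmapL : ∫ x, f x ∂(ν : Measure D) = ∫ ω, f (L ω) ∂P :=
    integral_map hL f.continuous.aestronglyMeasurable
  rw [← hmapL]
  simp only [← hmapn]
  exact hint

/-- Generalized Slutsky theorem in `L^r` spaces, parts (i) and (ii). -/
theorem generalized_slutsky
    {S : Type*} [MeasurableSpace S] (ρ : Measure S) [SigmaFinite ρ] :
    -- (i) deterministic part: for conjugate r, r' ∈ [1,∞],
    -- fₙ → f in L^r and gₙ → g in L^{r'} imply fₙ gₙ → f g in L¹.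
    (∀ (r r' : ℝ≥0∞), 1 ≤ r → 1 ≤ r' → 1 / r + 1 / r' = 1 →
      ∀ (fn : ℕ → S → ℝ) (f : S → ℝ) (gn : ℕ → S → ℝ) (g : S → ℝ),
        (∀ n, MemLp (fn n) r ρ) → MemLp f r ρ →
        (∀ n, MemLp (gn n) r' ρ) → MemLp g r' ρ →
        Tendsto (fun n => eLpNorm (fun s => fn n s - f s) r ρ) atTop (𝓝 0) →
        Tendsto (fun n => eLpNorm (fun s => gn n s - g s) r' ρ) atTop (𝓝 0) →
        Tendsto (fun n => eLpNorm (fun s => fn n s * gn n s - f s * g s) 1 ρ) atTop (𝓝 0))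
    ∧
    -- (ii) stochastic part: for conjugate 1 < r, r' < ∞, if Yₙ →_w Y in L^r and
    -- Zₙ →_w z in L^{r'} with z deterministic, then Yₙ Zₙ →_w Y z in L¹.
    (∀ (r r' : ℝ≥0∞), 1 < r → r < ⊤ → 1 < r' → r' < ⊤ → 1 / r + 1 / r' = 1 →
      ∀ (_hr : Fact (1 ≤ r)) (_hr' : Fact (1 ≤ r')),
      ∀ {Ω : Type} [MeasurableSpace Ω] (P : Measure Ω), IsProbabilityMeasure P →
      ∀ (Yn : ℕ → Ω → Lp ℝ r ρ) (Y : Ω → Lp ℝ r ρ) (Zn : ℕ → Ω → Lp ℝ r' ρ)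
        (z : Lp ℝ r' ρ),
        (∀ n, AEStronglyMeasurable (Yn n) P) → AEStronglyMeasurable Y P →
        (∀ n, AEStronglyMeasurable (Zn n) P) →
        WeakConv P Yn Y → WeakConv P Zn (fun _ => z) →
        -- the products Yₙ Zₙ and Y z, as L¹(ρ)-valued random elements
        ∀ (Wn : ℕ → Ω → Lp ℝ 1 ρ) (W : Ω → Lp ℝ 1 ρ),
          (∀ n ω, (Wn n ω : S → ℝ) =ᵐ[ρ] fun s => (Yn n ω : S → ℝ) s * (Zn n ω : S → ℝ) s) →
          (∀ ω, (W ω : S → ℝ) =ᵐ[ρ] fun s => (Y ω : S → ℝ) s * (z : S → ℝ) s) →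
          WeakConv P Wn W) := by
  constructor
  · intro r r' hr hr' hrr' fn f gn g hfn hf hgn hg hfconv hgconv
    have h_conj : (1:ℝ≥0∞)/1 = 1/r + 1/r' := by rw [hrr', one_div_one]
    haveI : ENNReal.HolderTriple r r' 1 := ⟨by simpa [one_div] using hrr'⟩
    have key : ∀ n, eLpNorm (fun s => fn n s * gn n s - f s * g s) 1 ρ ≤
        (eLpNorm (fun s => fn n s - f s) r ρ + eLpNorm f r ρ)
          * eLpNorm (fun s => gn n s - g s) r' ρ
        + eLpNorm (fun s => fn n s - f s) r ρ * eLpNorm g r' ρ := by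
      intro n
      have hdecomp : (fun s => fn n s * gn n s - f s * g s) =
          fun s => (fn n s * (gn n s - g s)) + ((fn n s - f s) * g s) := by funext s; ring
      rw [hdecomp]
      refine le_trans (eLpNorm_add_le ((hfn n).1.mul ((hgn n).1.sub hg.1))
        (((hfn n).1.sub hf.1).mul hg.1) le_rfl) ?_
      refine add_le_add ?_ ?_
      · refine le_trans (le_of_le_of_eq (eLpNorm_le_eLpNorm_mul_eLpNorm'_of_norm (p := r) (q := r') (hfn n).1
          ((hgn n).1.sub hg.1) (· * ·) 1 (Eventually.of_forall fun s => by simp)) (by rw [ENNReal.coe_one, one_mul])) ?_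
        gcongr
        calc eLpNorm (fn n) r ρ = eLpNorm (fun s => (fn n s - f s) + f s) r ρ := by
              congr 1; funext s; ring
          _ ≤ _ := eLpNorm_add_le ((hfn n).1.sub hf.1) hf.1 hr
        exact le_rfl
      · exact le_of_le_of_eq (eLpNorm_le_eLpNorm_mul_eLpNorm'_of_norm (p := r) (q := r') ((hfn n).1.sub hf.1) hg.1 (· * ·) 1
          (Eventually.of_forall fun s => by simp)) (by rw [ENNReal.coe_one, one_mul]; rfl)
    have hf_top : eLpNorm f r ρ ≠ ⊤ := hf.eLpNorm_ne_top
    have hg_top : eLpNorm g r' ρ ≠ ⊤ := hg.eLpNorm_ne_top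
    have hlim : Tendsto (fun n =>
        (eLpNorm (fun s => fn n s - f s) r ρ + eLpNorm f r ρ)
          * eLpNorm (fun s => gn n s - g s) r' ρ
        + eLpNorm (fun s => fn n s - f s) r ρ * eLpNorm g r' ρ) atTop (𝓝 0) := by
      have h1 : Tendsto (fun n => (eLpNorm (fun s => fn n s - f s) r ρ + eLpNorm f r ρ)
          * eLpNorm (fun s => gn n s - g s) r' ρ) atTop (𝓝 ((0 + eLpNorm f r ρ) * 0)) := by
        refine ENNReal.Tendsto.mul (hfconv.add tendsto_const_nhds) ?_ hgconv ?_
        · right; exact ENNReal.zero_ne_top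
        · right; simp [hf_top]
      have h2 : Tendsto (fun n => eLpNorm (fun s => fn n s - f s) r ρ * eLpNorm g r' ρ)
          atTop (𝓝 (0 * eLpNorm g r' ρ)) := by
        refine ENNReal.Tendsto.mul hfconv ?_ tendsto_const_nhds ?_
        · right; exact hg_top
        · right; exact ENNReal.zero_ne_top
      have := h1.add h2
      simpa using this
    exact tendsto_of_tendsto_of_tendsto_of_le_of_le tendsto_const_nhds hlim
      (fun n => zero_le) key
  · intro r r' hr1 hrt hr'1 hr't hrr' hFr hFr' Ω mΩ P hP Yn Y Zn z hYn hY hZn hYconv hZconv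
      Wn W hWn hW
    haveI := hFr; haveI := hFr'; haveI := hP
    letI : MeasurableSpace (Lp ℝ 1 ρ) := borel _
    haveI : BorelSpace (Lp ℝ 1 ρ) := ⟨rfl⟩
    have h_conj : (1:ℝ≥0∞)/1 = 1/r + 1/r' := by rw [hrr', one_div_one]
    haveI : ENNReal.HolderTriple r r' 1 := ⟨by simpa [one_div] using hrr'⟩
    -- the product as a bounded bilinear map `L^r × L^{r'} → L¹`
    have hmemB : ∀ (y : Lp ℝ r ρ) (w : Lp ℝ r' ρ),
        MemLp (fun s => (y : S → ℝ) s * (w : S → ℝ) s) 1 ρ := fun y w =>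
      (Lp.memLp w).smul (Lp.memLp y)
    set B : Lp ℝ r ρ → Lp ℝ r' ρ → Lp ℝ 1 ρ := fun y w => (hmemB y w).toLp _ with hBdef
    have hBcoe : ∀ y w, (B y w : S → ℝ) =ᵐ[ρ] fun s => (y : S → ℝ) s * (w : S → ℝ) s :=
      fun y w => MemLp.coeFn_toLp _
    have hBnorm : ∀ y w, ‖B y w‖ ≤ ‖y‖ * ‖w‖ := by
      intro y w
      rw [Lp.norm_def, Lp.norm_def, Lp.norm_def, ← ENNReal.toReal_mul]
      refine ENNReal.toReal_mono
        (ENNReal.mul_ne_top (Lp.eLpNorm_ne_top y) (Lp.eLpNorm_ne_top w)) ?_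
      calc eLpNorm (B y w : S → ℝ) 1 ρ
          = eLpNorm (fun s => (y : S → ℝ) s * (w : S → ℝ) s) 1 ρ :=
            eLpNorm_congr_ae (hBcoe y w)
        _ ≤ _ := le_of_le_of_eq (eLpNorm_le_eLpNorm_mul_eLpNorm'_of_norm (Lp.aestronglyMeasurable y)
            (Lp.aestronglyMeasurable w) (· * ·) 1
            (Eventually.of_forall fun s => by simp)) (by rw [ENNReal.coe_one, one_mul])
    have hB_add_left : ∀ y₁ y₂ w, B (y₁ + y₂) w = B y₁ w + B y₂ w := by
      intro y₁ y₂ w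
      apply Lp.ext
      filter_upwards [hBcoe (y₁ + y₂) w, hBcoe y₁ w, hBcoe y₂ w, Lp.coeFn_add y₁ y₂,
        Lp.coeFn_add (B y₁ w) (B y₂ w)] with s h1 h2 h3 h4 h5
      rw [h1, h5, Pi.add_apply, h2, h3, h4, Pi.add_apply]
      ring
    have hB_smul_left : ∀ (c : ℝ) y w, B (c • y) w = c • B y w := by
      intro c y w
      apply Lp.ext
      filter_upwards [hBcoe (c • y) w, hBcoe y w, Lp.coeFn_smul c y,
        Lp.coeFn_smul c (B y w)] with s h1 h2 h3 h4
      rw [h1, h4, Pi.smul_apply, h2, h3, Pi.smul_apply, smul_eq_mul, smul_eq_mul]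
      ring
    have hB_add_right : ∀ y w₁ w₂, B y (w₁ + w₂) = B y w₁ + B y w₂ := by
      intro y w₁ w₂
      apply Lp.ext
      filter_upwards [hBcoe y (w₁ + w₂), hBcoe y w₁, hBcoe y w₂, Lp.coeFn_add w₁ w₂,
        Lp.coeFn_add (B y w₁) (B y w₂)] with s h1 h2 h3 h4 h5
      rw [h1, h5, Pi.add_apply, h2, h3, h4, Pi.add_apply]
      ring
    have hB_smul_right : ∀ (c : ℝ) y w, B y (c • w) = c • B y w := by
      intro c y w
      apply Lp.ext
      filter_upwards [hBcoe y (c • w), hBcoe y w, Lp.coeFn_smul c w,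
        Lp.coeFn_smul c (B y w)] with s h1 h2 h3 h4
      rw [h1, h4, Pi.smul_apply, h2, h3, Pi.smul_apply, smul_eq_mul, smul_eq_mul]
      ring
    have hB_sub_right : ∀ y w₁ w₂, B y (w₁ - w₂) = B y w₁ - B y w₂ := by
      intro y w₁ w₂
      apply Lp.ext
      filter_upwards [hBcoe y (w₁ - w₂), hBcoe y w₁, hBcoe y w₂, Lp.coeFn_sub w₁ w₂,
        Lp.coeFn_sub (B y w₁) (B y w₂)] with s h1 h2 h3 h4 h5
      rw [h1, h5, Pi.sub_apply, h2, h3, h4, Pi.sub_apply]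
      ring
    have hBbdd : IsBoundedBilinearMap ℝ (fun p : Lp ℝ r ρ × Lp ℝ r' ρ => B p.1 p.2) :=
      { add_left := hB_add_left
        smul_left := fun c y w => hB_smul_left c y w
        add_right := hB_add_right
        smul_right := fun c y w => hB_smul_right c y w
        bound := ⟨1, one_pos, fun y w => by simpa using hBnorm y w⟩ }
    have hBcont : Continuous (fun p : Lp ℝ r ρ × Lp ℝ r' ρ => B p.1 p.2) := hBbdd.continuous
    have hBzcont : Continuous (fun y : Lp ℝ r ρ => B y z) :=
      hBcont.comp (continuous_id.prodMk continuous_const)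
    -- identification of the products
    have hWeq : ∀ ω, W ω = B (Y ω) z := fun ω => Lp.ext ((hW ω).trans (hBcoe (Y ω) z).symm)
    have hWneq : ∀ n ω, Wn n ω = B (Yn n ω) (Zn n ω) := fun n ω =>
      Lp.ext ((hWn n ω).trans (hBcoe _ _).symm)
    -- measurability
    have hXmeas : ∀ n, AEMeasurable (fun ω => B (Yn n ω) z) P := fun n =>
      (hBzcont.comp_aestronglyMeasurable (hYn n)).aemeasurable
    have hWnmeas : ∀ n, AEMeasurable (Wn n) P := by
      intro n
      have h : Wn n = fun ω => B (Yn n ω) (Zn n ω) := funext (hWneq n)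
      rw [h]
      exact (hBcont.comp_aestronglyMeasurable ((hYn n).prodMk (hZn n))).aemeasurable
    have hWmeas : AEMeasurable W P := by
      have h : W = fun ω => B (Y ω) z := funext hWeq
      rw [h]
      exact (hBzcont.comp_aestronglyMeasurable hY).aemeasurable
    -- weak convergence of `B (Yₙ ·) z` to `W` by the continuous mapping theorem
    have hXconv : WeakConv P (fun n ω => B (Yn n ω) z) W := by
      intro F
      have h := hYconv (F.compContinuous ⟨fun y => B y z, hBzcont⟩)
      have hWfun : W = fun ω => B (Y ω) z := funext hWeq
      rw [hWfun]
      exact h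
    -- the distance bound
    have hdistbound : ∀ n ω, dist (B (Yn n ω) z) (Wn n ω) ≤ ‖Yn n ω‖ * dist (Zn n ω) z := by
      intro n ω
      rw [hWneq n ω, dist_eq_norm, (hB_sub_right (Yn n ω) z (Zn n ω)).symm]
      calc ‖B (Yn n ω) (z - Zn n ω)‖ ≤ ‖Yn n ω‖ * ‖z - Zn n ω‖ := hBnorm _ _
        _ = ‖Yn n ω‖ * dist (Zn n ω) z := by rw [← dist_eq_norm, dist_comm]
    -- convergence in probability of the distance
    have hprob : ∀ δ : ℝ, 0 < δ →
        Tendsto (fun n => P {ω | δ ≤ dist (B (Yn n ω) z) (Wn n ω)}) atTop (𝓝 0) := by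
      intro δ hδ
      rw [ENNReal.tendsto_nhds_zero]
      intro ε hε
      have hε2 : (0:ℝ≥0∞) < ε / 2 := ENNReal.half_pos hε.ne'
      have hminT : min (ε/2) 1 ≠ ⊤ := ne_top_of_le_ne_top (by simp) (min_le_right _ _)
      have hc : (0:ℝ) < (min (ε/2) 1).toReal :=
        ENNReal.toReal_pos (lt_min hε2 one_pos).ne' hminT
      obtain ⟨M, hM, hMev⟩ := tight_of_weakconv' hYn hY hYconv hc
      have hZev := ENNReal.tendsto_nhds_zero.mp
        (inprob_of_weakconv_const hZn hZconv (div_pos hδ hM)) (ε/2) hε2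
      filter_upwards [hMev, hZev] with n h1 h2
      have hsub : {ω | δ ≤ dist (B (Yn n ω) z) (Wn n ω)} ⊆
          {ω | M ≤ ‖Yn n ω‖} ∪ {ω | δ/M ≤ dist (Zn n ω) z} := by
        intro ω hω
        by_contra hcon
        simp only [Set.mem_union, Set.mem_setOf_eq, not_or, not_le] at hcon
        obtain ⟨hy, hz⟩ := hcon
        have hlt : dist (B (Yn n ω) z) (Wn n ω) < δ := by
          calc dist (B (Yn n ω) z) (Wn n ω) ≤ ‖Yn n ω‖ * dist (Zn n ω) z := hdistbound n ω
            _ ≤ ‖Yn n ω‖ * (δ/M) := mul_le_mul_of_nonneg_left hz.le (norm_nonneg _)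
            _ < M * (δ/M) := mul_lt_mul_of_pos_right hy (by positivity)
            _ = δ := by field_simp
        have hge : δ ≤ dist (B (Yn n ω) z) (Wn n ω) := hω
        exact absurd hge hlt.not_ge
      calc P {ω | δ ≤ dist (B (Yn n ω) z) (Wn n ω)}
          ≤ P ({ω | M ≤ ‖Yn n ω‖} ∪ {ω | δ/M ≤ dist (Zn n ω) z}) := measure_mono hsub
        _ ≤ P {ω | M ≤ ‖Yn n ω‖} + P {ω | δ/M ≤ dist (Zn n ω) z} := measure_union_le _ _
        _ ≤ ε/2 + ε/2 := by
            refine add_le_add (h1.trans ?_) h2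
            rw [ENNReal.ofReal_toReal hminT]
            exact min_le_left _ _
        _ = ε := ENNReal.add_halves ε
    exact weakconv_of_inprob hXmeas hWnmeas hWmeas hXconv hprob
end
end
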